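/- Let τ = (τ_n : V_{n+1}* → V_n*)_{n≥0} be a directive sequence of morphisms satisfying Property (P_∞) with V_n = {v_{1,n},…,v_{m_n,n}}. Let x, y ∈ X_τ satisfy x_i = y_i for all i < 0 and x_0 ≠ y_0, and for each n ≥ 1 let x^{(n)}, y^{(n)} ∈ X_τ^{(n)} be the τ_{[0,n)}-factorizations of x and y (i.e. x = S^{r_n}(τ_{[0,n)}(x^{(n)})) with 0 ≤ r_n < |τ_{[0,n)}(x^{(n)}_0)|, and similarly for y). Then there exist N ≥ 1 and 1 ≤ i ≤ N such that J(x^{(n)}, y^{(n)}) = (v_{i,n}, 0) for all n ≥ N. -/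

import Mathlib

open Filter Topology MeasureTheory

namespace AsympSOE

/-! ### Subshift basics -/

/-- Shift of a bi-infinite sequence by `n` (the `n`-th power of the left shift `S`). -/
def SShift {A : Type*} (n : ℤ) (x : ℤ → A) : ℤ → A := fun i => x (i + n)

/-- Two bi-infinite sequences are (left) asymptotic: they agree on a left half-line. -/
def SAsymp {A : Type*} (x y : ℤ → A) : Prop := ∃ ℓ : ℤ, ∀ i < ℓ, x i = y i

/-- `y` belongs to the shift-orbit of `x`. -/
def SSameOrbit {A : Type*} (x y : ℤ → A) : Prop := ∃ n : ℤ, SShift n x = y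

/-- The shift-orbits of `x` and `y` are asymptotic. -/
def SOrbAsymp {A : Type*} (x y : ℤ → A) : Prop :=
  ∃ n n' : ℤ, SAsymp (SShift n x) (SShift n' y)

/-- `C` is an asymptotic component of the subshift `X`: it is the `SOrbAsymp`-class of
some `x ∈ X` and contains at least two distinct orbits. -/
def SIsAsymComponent {A : Type*} (X : Set (ℤ → A)) (C : Set (ℤ → A)) : Prop :=
  ∃ x ∈ X, C = {y ∈ X | SOrbAsymp x y} ∧ ∃ y ∈ X, SOrbAsymp x y ∧ ¬ SSameOrbit x y

/-- A subshift: a nonempty closed shift-invariant set of bi-infinite sequences. -/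
def IsSubshift {A : Type*} [TopologicalSpace A] (X : Set (ℤ → A)) : Prop :=
  X.Nonempty ∧ IsClosed X ∧ (∀ x ∈ X, SShift 1 x ∈ X) ∧ (∀ x ∈ X, SShift (-1) x ∈ X)

/-- A minimal subshift: every orbit is dense. -/
def IsMinimalSubshift {A : Type*} [TopologicalSpace A] (X : Set (ℤ → A)) : Prop :=
  IsSubshift X ∧ ∀ x ∈ X, ∀ y ∈ X, y ∈ closure {z | SSameOrbit x z}

/-- The words of length `n` appearing in points of `X`. -/
def langOf {A : Type*} (X : Set (ℤ → A)) (n : ℕ) : Set (List A) :=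
  {w | ∃ x ∈ X, ∃ a : ℤ, (List.range n).map (fun t => x (a + t)) = w}

/-- The complexity function of a subshift. -/
noncomputable def complexityOf {A : Type*} (X : Set (ℤ → A)) (n : ℕ) : ℕ :=
  (langOf X n).ncard

/-- A Toeplitz sequence. -/
def IsToeplitzSeq {A : Type*} (x : ℤ → A) : Prop :=
  ∀ n : ℤ, ∃ p : ℕ, 0 < p ∧ ∀ k : ℤ, x (n + k * p) = x n

/-- A Toeplitz subshift: the shift-orbit closure of a Toeplitz sequence. -/
def IsToeplitzSubshift {A : Type*} [TopologicalSpace A] (X : Set (ℤ → A)) : Prop :=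
  ∃ x : ℤ → A, IsToeplitzSeq x ∧ X = closure {z | SSameOrbit x z}

/-! ### General topological dynamical systems -/

/-- The (full) orbit of `x` under the invertible map `T`. -/
def orbitEq {X : Type*} (T : Equiv.Perm X) (x : X) : Set X := {y | ∃ n : ℤ, (T ^ n) x = y}

/-- `x` and `y` are (left) asymptotic for `T`: `dist (T⁻ⁿ x) (T⁻ⁿ y) → 0` as `n → ∞`. -/
def MAsymp {X : Type*} [MetricSpace X] (T : Equiv.Perm X) (x y : X) : Prop :=
  Tendsto (fun n : ℕ => dist ((T ^ (-(n : ℤ))) x) ((T ^ (-(n : ℤ))) y)) atTop (𝓝 0)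

/-- The orbits of `x` and `y` are asymptotic. -/
def MOrbAsymp {X : Type*} [MetricSpace X] (T : Equiv.Perm X) (x y : X) : Prop :=
  ∃ n n' : ℤ, MAsymp T ((T ^ n) x) ((T ^ n') y)

/-- `C` is an asymptotic component of the system `(X, T)`: the `MOrbAsymp`-class of some
point `x`, containing at least two distinct orbits. -/
def MIsAsymComponent {X : Type*} [MetricSpace X] (T : Equiv.Perm X) (C : Set X) : Prop :=
  ∃ x, C = {y | MOrbAsymp T x y} ∧ ∃ y, MOrbAsymp T x y ∧ y ∉ orbitEq T x

/-- A minimal Cantor system: the compact metric space `X` is a Cantor space (nonempty,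
totally disconnected, without isolated points) and every `T`-orbit is dense. -/
def IsMinimalCantor {X : Type*} [MetricSpace X] (T : X ≃ₜ X) : Prop :=
  CompactSpace X ∧ TotallyDisconnectedSpace X ∧ Nonempty X ∧
    (∀ x : X, Filter.NeBot (𝓝[≠] x)) ∧ ∀ x : X, Dense (orbitEq T.toEquiv x)

/-- Strong orbit equivalence of the systems `(X, T)` and `(Y, S)`: an orbit equivalence
whose two orbit cocycles each have at most one point of discontinuity. -/
def IsSOE {X Y : Type*} [TopologicalSpace X] [TopologicalSpace Y]
    (T : X ≃ₜ X) (S : Y ≃ₜ Y) : Prop :=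
  ∃ φ : X ≃ₜ Y,
    (∀ x : X, φ '' orbitEq T.toEquiv x = orbitEq S.toEquiv (φ x)) ∧
    ∃ α β : X → ℤ,
      (∀ x, φ (T x) = (S.toEquiv ^ α x) (φ x)) ∧
      (∀ x, φ ((T.toEquiv ^ β x) x) = S (φ x)) ∧
      {x | ¬ContinuousAt α x}.Subsingleton ∧
      {x | ¬ContinuousAt β x}.Subsingleton

/-- The automorphism group of a system `(Y, S)`, as a subgroup of the permutation group:
the bi-continuous bijections commuting with `S`. -/
def autGroup {Y : Type*} [TopologicalSpace Y] (S : Y ≃ₜ Y) : Subgroup (Equiv.Perm Y) where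
  carrier := {φ | Continuous φ ∧ Continuous φ.symm ∧ ∀ y, φ (S y) = S (φ y)}
  one_mem' := ⟨continuous_id, continuous_id, fun _ => rfl⟩
  mul_mem' := by
    rintro a b ⟨ha1, ha2, ha3⟩ ⟨hb1, hb2, hb3⟩
    refine ⟨ha1.comp hb1, hb2.comp ha2, fun y => ?_⟩
    simp only [Equiv.Perm.mul_apply, hb3, ha3]
  inv_mem' := by
    rintro a ⟨ha1, ha2, ha3⟩
    refine ⟨by simpa using ha2, by exact ha1, fun y => ?_⟩
    have h : a (S (a⁻¹ y)) = S y := by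
      rw [ha3 (a⁻¹ y)]; exact congrArg S (a.apply_symm_apply y)
    calc a⁻¹ (S y) = a⁻¹ (a (S (a⁻¹ y))) := by rw [h]
    _ = S (a⁻¹ y) := a.symm_apply_apply _

/-! ### S-adic subshifts and Property (P_k) -/

/-- The word `x_a x_{a+1} … x_{a+len-1}` read in the bi-infinite sequence `x`. -/
def factorWord {A : Type*} (x : ℤ → A) (a : ℤ) (len : ℕ) : List A :=
  (List.range len).map fun t => x (a + t)

/-- `tauIter τ n d a = (τ_n ∘ τ_{n+1} ∘ … ∘ τ_{n+d-1}) (a)`: the image of the letter `a`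
of level `n + d` under the composition of the directive sequence down to level `n`.
In particular `tauIter τ 0 n` is `τ_{[0,n)}`. -/
def tauIter (τ : ℕ → ℕ → List ℕ) (n : ℕ) : ℕ → ℕ → List ℕ
  | 0, a => [a]
  | d + 1, a => (τ (n + d) a).flatMap (tauIter τ n d)

/-- The S-adic subshift generated by the directive sequence `τ` at level `n`
(the level-`n` alphabet consists of the naturals `< m n`). -/
def SAdicLevel (m : ℕ → ℕ) (τ : ℕ → ℕ → List ℕ) (n : ℕ) : Set (ℤ → ℕ) :=
  {x | (∀ i, x i < m n) ∧
    ∀ (a : ℤ) (len : ℕ), ∃ N c, n < N ∧ c < m N ∧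
      factorWord x a len <:+: tauIter τ n (N - n) c}

/-- The prescribed prefix `v_1² v_2² … v_{a}² v_{a+1} … v_{k+1}` in `0`-based letters:
letters `0, …, a-1` doubled, followed by the letters `a, …, k`. -/
def pkPrefix (k a : ℕ) : List ℕ :=
  (List.range a).flatMap (fun j => [j, j]) ++ (List.range (k + 1 - a)).map (fun j => a + j)

/-- Property `(P_k)` for a directive sequence `τ` with alphabet sizes `m`: `τ₀` is a
(non-erasing) hat morphism and, for every `n ≥ 1`, `τ_n` is primitive, has the prescribed
prefixes, ends with the last letter of the level-`n` alphabet, and no image contains the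
word (last letter)(first letter).  Level-`n` letters are `0, 1, …, m n - 1`, so the
letter `v_{i,n}` of the paper is `i - 1`. -/
def PropertyPk (k : ℕ) (m : ℕ → ℕ) (τ : ℕ → ℕ → List ℕ) : Prop :=
  (∀ n, 1 ≤ n → k < m n) ∧
  (∀ n a, a < m (n + 1) → τ n a ≠ [] ∧ ∀ c ∈ τ n a, c < m n) ∧
  (∀ a b, a < m 1 → b < m 1 → a ≠ b → ∀ c, c ∈ τ 0 a → c ∉ τ 0 b) ∧
  (∀ n, 1 ≤ n → ∀ a, a < m (n + 1) → ∀ b, b < m n → b ∈ τ n a) ∧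
  (∀ n, 1 ≤ n → ∀ a, a ≤ k → pkPrefix k a <+: τ n a) ∧
  (∀ n, 1 ≤ n → ∀ a, k < a → a < m (n + 1) → (List.replicate (a + 1) 0 ++ [1]) <+: τ n a) ∧
  (∀ n, 1 ≤ n → ∀ a, a < m (n + 1) →
    ([m n - 1] <:+ τ n a ∧ ¬ ([m n - 1, 0] <:+: τ n a)))

/-- Property `(P_∞)`: as `(P_k)` but with `k` replaced by `n` at level `n`. -/
def PropertyPinf (m : ℕ → ℕ) (τ : ℕ → ℕ → List ℕ) : Prop :=
  (∀ n, 1 ≤ n → n < m n) ∧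
  (∀ n a, a < m (n + 1) → τ n a ≠ [] ∧ ∀ c ∈ τ n a, c < m n) ∧
  (∀ a b, a < m 1 → b < m 1 → a ≠ b → ∀ c, c ∈ τ 0 a → c ∉ τ 0 b) ∧
  (∀ n, 1 ≤ n → ∀ a, a < m (n + 1) → ∀ b, b < m n → b ∈ τ n a) ∧
  (∀ n, 1 ≤ n → ∀ a, a ≤ n → pkPrefix n a <+: τ n a) ∧
  (∀ n, 1 ≤ n → ∀ a, n < a → a < m (n + 1) → (List.replicate (a + 1) 0 ++ [1]) <+: τ n a) ∧
  (∀ n, 1 ≤ n → ∀ a, a < m (n + 1) →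
    ([m n - 1] <:+ τ n a ∧ ¬ ([m n - 1, 0] <:+: τ n a)))

/-- The (integer) position in the concatenation `σ(y)` at which the block `σ(y_j)` starts,
the block `σ(y_0)` starting at position `0`. -/
def cumLen (σ : ℕ → List ℕ) (y : ℤ → ℕ) (j : ℤ) : ℤ :=
  if 0 ≤ j then ((List.range j.toNat).map fun t => ((σ (y t)).length : ℤ)).sum
  else -(((List.range (-j).toNat).map fun t => ((σ (y (j + t))).length : ℤ)).sum)

/-- `x = S^r (σ(y))`, where `σ(y) = … σ(y_{-1}).σ(y_0) σ(y_1) …` is the concatenated image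
of the bi-infinite sequence `y` (block `σ(y_0)` starting at coordinate `0`): for every `j`,
the word `σ(y_j)` is read in `x` starting at position `cumLen σ y j - r`. -/
def IsShiftedImage (σ : ℕ → List ℕ) (y : ℤ → ℕ) (r : ℤ) (x : ℤ → ℕ) : Prop :=
  ∀ j : ℤ, factorWord x (cumLen σ y j - r) (σ (y j)).length = σ (y j)


/-! ### Auxiliary development for Statement 17 -/

section Aux17

open List

lemma aux_flatMap_map {α β : Type*} (l : List α) (f : α → β) :
    (l.flatMap fun a => [f a]) = l.map f := by
  induction l with
  | nil => rfl
  | cons a t ih => simp [List.flatMap_cons, ih]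

lemma factorWord_def' {A : Type*} (x : ℤ → A) (a : ℤ) (len : ℕ) :
    factorWord x a len = (List.range len).map (fun t : ℕ => x (a + (t : ℤ))) := by
  unfold factorWord
  simp only [List.bind_eq_flatMap, List.pure_def]
  rw [aux_flatMap_map, List.map_map]
  rfl

lemma cumLen_def' (σ : ℕ → List ℕ) (y : ℤ → ℕ) (j : ℤ) :
    cumLen σ y j = if 0 ≤ j
      then ((List.range j.toNat).map fun t : ℕ => ((σ (y (t:ℤ))).length : ℤ)).sum
      else -(((List.range (-j).toNat).map fun t : ℕ => ((σ (y (j + (t:ℤ)))).length : ℤ)).sum) := by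
  unfold cumLen
  simp only [List.bind_eq_flatMap, List.pure_def]
  rw [aux_flatMap_map, aux_flatMap_map, List.map_map, List.map_map]
  rfl

/-- Pointwise description of `factorWord`. -/
lemma factorWord_getD (x : ℤ → ℕ) (a : ℤ) (len t : ℕ) (ht : t < len) :
    (factorWord x a len).getD t 0 = x (a + t) := by
  rw [factorWord_def']
  have h1 : t < ((List.range len).map fun t : ℕ => x (a + (t:ℤ))).length := by
    simpa using ht
  rw [List.getD_eq_getElem _ _ h1, List.getElem_map]
  congr 2
  simp

lemma factorWord_length (x : ℤ → ℕ) (a : ℤ) (len : ℕ) :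
    (factorWord x a len).length = len := by simp [factorWord_def']

lemma factorWord_eq {x : ℤ → ℕ} {a : ℤ} {l : List ℕ}
    (h : ∀ t : ℕ, t < l.length → x (a + (t:ℤ)) = l.getD t 0) :
    factorWord x a l.length = l := by
  apply List.ext_getElem (factorWord_length x a l.length)
  intro t h1 h2
  have ht : t < l.length := h2
  rw [← List.getD_eq_getElem _ 0 h2, ← h t ht, ← factorWord_getD x a l.length t ht,
    List.getD_eq_getElem]

lemma factorWord_congr {x y : ℤ → ℕ} {a b : ℤ} {len : ℕ}
    (h : ∀ t : ℕ, t < len → x (a + (t:ℤ)) = y (b + (t:ℤ))) :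
    factorWord x a len = factorWord y b len := by
  rw [factorWord_def', factorWord_def']
  apply List.map_congr_left
  intro t ht
  exact h t (List.mem_range.1 ht)

lemma factorWord_add (x : ℤ → ℕ) (a : ℤ) (n1 n2 : ℕ) :
    factorWord x a (n1 + n2) = factorWord x a n1 ++ factorWord x (a + n1) n2 := by
  rw [factorWord_def', factorWord_def', factorWord_def']
  rw [List.range_add, List.map_append, List.map_map]
  congr 1
  apply List.map_congr_left
  intro t _
  show x (a + ((n1 + t : ℕ) : ℤ)) = x (a + (n1:ℤ) + (t:ℤ))
  congr 1
  push_cast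
  ring

lemma factorWord_shift (k : ℤ) (z : ℤ → ℕ) (a : ℤ) (len : ℕ) :
    factorWord (SShift k z) a len = factorWord z (a + k) len := by
  apply factorWord_congr
  intro t _
  show z (a + t + k) = z (a + k + t)
  congr 1
  ring

/-- An integer recursion principle: two functions with equal increments agree. -/
lemma aux_int_rec_eq {f g : ℤ → ℤ} (h0 : f 0 = g 0)
    (hstep : ∀ j : ℤ, f (j + 1) - f j = g (j + 1) - g j) : ∀ j, f j = g j := by
  intro j
  induction j using Int.induction_on with
  | zero => exact h0
  | succ k ih => have := hstep k; omega
  | pred k ih =>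
      have := hstep (-(k : ℤ) - 1)
      simp only [sub_add_cancel] at this
      omega

lemma cumLen_zero (σ : ℕ → List ℕ) (y : ℤ → ℕ) : cumLen σ y 0 = 0 := by
  rw [cumLen_def']
  simp

lemma cumLen_succ (σ : ℕ → List ℕ) (y : ℤ → ℕ) (j : ℤ) :
    cumLen σ y (j + 1) = cumLen σ y j + ((σ (y j)).length : ℤ) := by
  rcases le_or_gt 0 j with hj | hj
  · rw [cumLen_def', cumLen_def', if_pos hj, if_pos (by omega : (0:ℤ) ≤ j + 1)]
    have h1 : (j + 1).toNat = j.toNat + 1 := by omega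
    rw [h1, List.range_succ, List.map_append, List.sum_append]
    have h2 : ((j.toNat : ℤ)) = j := Int.toNat_of_nonneg hj
    simp [h2]
  · rcases eq_or_lt_of_le (by omega : j + 1 ≤ 0) with hj1 | hj1
    · have hjm : j = -1 := by omega
      subst hjm
      rw [cumLen_def', cumLen_def', if_pos (by omega : (0:ℤ) ≤ -1 + 1), if_neg (by omega : ¬ (0:ℤ) ≤ -1)]
      rw [show ((-(-1:ℤ)).toNat) = 1 from rfl, show ((-1:ℤ)+1).toNat = 0 from rfl,
        show List.range 1 = [0] from rfl]
      simp
    · rw [cumLen_def', cumLen_def', if_neg (by omega : ¬ (0:ℤ) ≤ j + 1), if_neg (by omega : ¬ (0:ℤ) ≤ j)]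
      have h1 : (-j).toNat = (-(j + 1)).toNat + 1 := by omega
      rw [h1, List.range_succ_eq_map, List.map_cons, List.sum_cons, List.map_map]
      have h2 : ((fun t : ℕ => ((σ (y (j + t))).length : ℤ)) ∘ Nat.succ)
          = fun t : ℕ => ((σ (y (j + 1 + t))).length : ℤ) := by
        funext t
        show ((σ (y (j + (t + 1 : ℕ)))).length : ℤ) = _
        congr 2
        push_cast
        ring
      rw [h2]
      push_cast
      ring_nf

lemma cumLen_one (σ : ℕ → List ℕ) (y : ℤ → ℕ) : cumLen σ y 1 = ((σ (y 0)).length : ℤ) := by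
  have h := cumLen_succ σ y 0
  rw [cumLen_zero, zero_add, zero_add] at h
  exact h

lemma cumLen_add_nat (σ : ℕ → List ℕ) (y : ℤ → ℕ) (a : ℤ) (L : ℕ) :
    cumLen σ y (a + L) = cumLen σ y a
      + ((List.range L).map fun o : ℕ => ((σ (y (a + (o:ℤ)))).length : ℤ)).sum := by
  induction L with
  | zero => simp
  | succ L ih =>
      have h1 : a + ((L + 1 : ℕ) : ℤ) = (a + L) + 1 := by push_cast; ring
      rw [h1, cumLen_succ, ih, List.range_succ, List.map_append, List.sum_append]
      simp [add_assoc]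

lemma cumLen_shift (σ : ℕ → List ℕ) (z : ℤ → ℕ) (k : ℤ) :
    ∀ j, cumLen σ (SShift k z) j = cumLen σ z (j + k) - cumLen σ z k := by
  apply aux_int_rec_eq
  · simp [cumLen_zero]
  · intro j
    have h1 := cumLen_succ σ (SShift k z) j
    have h2 := cumLen_succ σ z (j + k)
    have h3 : j + 1 + k = (j + k) + 1 := by ring
    rw [h3]
    show cumLen σ (SShift k z) (j+1) - cumLen σ (SShift k z) j = _
    rw [h1, h2]
    simp [SShift]

/-- Start position of the `j`-th block of a tiling. -/
def gridPt (σ : ℕ → List ℕ) (z : ℤ → ℕ) (r : ℤ) (j : ℤ) : ℤ := cumLen σ z j - r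

lemma gridPt_succ (σ : ℕ → List ℕ) (z : ℤ → ℕ) (r : ℤ) (j : ℤ) :
    gridPt σ z r (j + 1) = gridPt σ z r j + ((σ (z j)).length : ℤ) := by
  unfold gridPt
  rw [cumLen_succ]
  ring

section Grid

variable {σ : ℕ → List ℕ} {z : ℤ → ℕ} {r : ℤ} (hne : ∀ j : ℤ, σ (z j) ≠ [])
include hne

lemma grid_mono : StrictMono (gridPt σ z r) := by
  apply strictMono_int_of_lt_succ
  intro j
  rw [gridPt_succ]
  have : 0 < (σ (z j)).length := List.length_pos_iff.2 (hne j)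
  omega

lemma grid_key_neg : ∀ k : ℕ, gridPt σ z r (-(k : ℤ)) ≤ gridPt σ z r 0 - k := by
  intro k
  induction k with
  | zero => simp
  | succ k ih =>
      have h1 : gridPt σ z r (-(k:ℤ) - 1) < gridPt σ z r (-(k:ℤ) - 1 + 1) :=
        (grid_mono hne) (by omega)
      rw [show (-(k:ℤ) - 1 + 1) = -(k:ℤ) by ring] at h1
      rw [show (-((k+1:ℕ):ℤ)) = -(k:ℤ) - 1 by push_cast; ring]
      push_cast
      omega

lemma grid_key_pos : ∀ k : ℕ, gridPt σ z r 0 + k ≤ gridPt σ z r (k : ℤ) := by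
  intro k
  induction k with
  | zero => simp
  | succ k ih =>
      have h1 : gridPt σ z r (k:ℤ) < gridPt σ z r ((k:ℤ) + 1) := (grid_mono hne) (by omega)
      rw [show (((k+1:ℕ)):ℤ) = (k:ℤ) + 1 by push_cast; ring]
      push_cast
      omega

lemma grid_below (c : ℤ) : ∃ j : ℤ, gridPt σ z r (j + 1) < c := by
  obtain ⟨k, hk⟩ := exists_nat_gt (gridPt σ z r 0 - c)
  refine ⟨-(k : ℤ) - 1, ?_⟩
  rw [show (-(k:ℤ) - 1 + 1) = -(k:ℤ) by ring]
  have := grid_key_neg (r := r) hne k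
  omega

lemma grid_above (c : ℤ) : ∃ j : ℤ, c < gridPt σ z r j := by
  obtain ⟨k, hk⟩ := exists_nat_gt (c - gridPt σ z r 0)
  refine ⟨(k : ℤ), ?_⟩
  have := grid_key_pos (r := r) hne k
  omega

lemma grid_exists_block (p : ℤ) :
    ∃ j : ℤ, gridPt σ z r j ≤ p ∧ p < gridPt σ z r (j + 1) := by
  have hbdd : ∃ b : ℤ, ∀ i : ℤ, gridPt σ z r i ≤ p → i ≤ b := by
    obtain ⟨J, hJ⟩ := grid_above (r := r) hne p
    refine ⟨J, fun i hi => ?_⟩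
    by_contra hc
    push_neg at hc
    have : gridPt σ z r J < gridPt σ z r i := (grid_mono hne) hc
    omega
  have hinh : ∃ i : ℤ, gridPt σ z r i ≤ p := by
    obtain ⟨j, hj⟩ := grid_below (r := r) hne (p + 1)
    exact ⟨j + 1, by omega⟩
  obtain ⟨ub, hub, hmax⟩ := Int.exists_greatest_of_bdd hbdd hinh
  refine ⟨ub, hub, ?_⟩
  by_contra h
  push_neg at h
  have := hmax (ub + 1) h
  omega

lemma grid_block_uniq {p : ℤ} {j j' : ℤ}
    (h : gridPt σ z r j ≤ p ∧ p < gridPt σ z r (j + 1))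
    (h' : gridPt σ z r j' ≤ p ∧ p < gridPt σ z r (j' + 1)) : j = j' := by
  by_contra hne'
  rcases lt_or_gt_of_ne hne' with hlt | hlt
  · have : gridPt σ z r (j + 1) ≤ gridPt σ z r j' := (grid_mono hne).le_iff_le.2 (by omega)
    omega
  · have : gridPt σ z r (j' + 1) ≤ gridPt σ z r j := (grid_mono hne).le_iff_le.2 (by omega)
    omega

end Grid

lemma shifted_word {σ : ℕ → List ℕ} {z : ℤ → ℕ} {r : ℤ} {x : ℤ → ℕ}
    (h : IsShiftedImage σ z r x) (j : ℤ) :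
    factorWord x (gridPt σ z r j) (σ (z j)).length = σ (z j) := h j

lemma shifted_letter {σ : ℕ → List ℕ} {z : ℤ → ℕ} {r : ℤ} {x : ℤ → ℕ}
    (h : IsShiftedImage σ z r x) (j : ℤ) (o : ℕ) (ho : o < (σ (z j)).length) :
    x (gridPt σ z r j + o) = (σ (z j)).getD o 0 := by
  rw [← shifted_word h j, factorWord_getD _ _ _ _ ho]

lemma IsShiftedImage.shiftz {σ : ℕ → List ℕ} {w z : ℤ → ℕ} {s : ℤ}
    (h : IsShiftedImage σ w s z) (k : ℤ) : IsShiftedImage σ w (s + k) (SShift k z) := by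
  intro j
  rw [show cumLen σ w j - (s + k) = (cumLen σ w j - s) - k by ring, factorWord_shift]
  rw [show cumLen σ w j - s - k + k = cumLen σ w j - s by ring]
  exact h j


/-! #### Concatenation sequences and refinement -/

lemma aux_map_range_getD (l : List ℕ) (g : ℕ → ℤ) :
    (List.range l.length).map (fun o => g (l.getD o 0)) = l.map g := by
  apply List.ext_getElem (by simp)
  intro i h1 h2
  have hi : i < l.length := by simpa using h2
  rw [List.getElem_map, List.getElem_map, List.getElem_range,
    List.getD_eq_getElem l 0 hi]

lemma aux_len_flatMap (l : List ℕ) (σ : ℕ → List ℕ) :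
    ((l.flatMap σ).length : ℤ) = (l.map (fun b => ((σ b).length : ℤ))).sum := by
  induction l with
  | nil => rfl
  | cons a t ih => rw [List.flatMap_cons, List.length_append, List.map_cons, List.sum_cons, ← ih]; push_cast; ring

lemma flat_block (l : List ℕ) (σ : ℕ → List ℕ) (o : ℕ) (ho : o < l.length) :
    l.flatMap σ = (l.take o).flatMap σ ++ σ (l.getD o 0) ++ (l.drop (o+1)).flatMap σ := by
  conv_lhs => rw [← List.take_append_drop o l]
  rw [List.flatMap_append, List.drop_eq_getElem_cons ho, List.flatMap_cons,
    ← List.getD_eq_getElem l 0 ho, ← List.append_assoc]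

section Concat

variable {ν : ℕ → List ℕ} {w : ℤ → ℕ}

lemma cum_exists_block (hne : ∀ j : ℤ, ν (w j) ≠ []) (p : ℤ) :
    ∃ j : ℤ, cumLen ν w j ≤ p ∧ p < cumLen ν w (j + 1) := by
  obtain ⟨j, hj1, hj2⟩ := grid_exists_block (r := 0) hne p
  unfold gridPt at hj1 hj2
  exact ⟨j, by omega, by omega⟩

lemma cum_block_uniq (hne : ∀ j : ℤ, ν (w j) ≠ []) {p : ℤ} {j j' : ℤ}
    (h : cumLen ν w j ≤ p ∧ p < cumLen ν w (j + 1))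
    (h' : cumLen ν w j' ≤ p ∧ p < cumLen ν w (j' + 1)) : j = j' := by
  exact grid_block_uniq (r := 0) hne (p := p)
    ⟨by unfold gridPt; omega, by unfold gridPt; omega⟩
    ⟨by unfold gridPt; omega, by unfold gridPt; omega⟩

/-- The bi-infinite concatenation of the words `ν (w j)`, block `0` starting at `0`. -/
noncomputable def bIdx (ν : ℕ → List ℕ) (w : ℤ → ℕ) (p : ℤ) : ℤ :=
  Classical.epsilon (fun j : ℤ => cumLen ν w j ≤ p ∧ p < cumLen ν w (j + 1))

noncomputable def concatSeq (ν : ℕ → List ℕ) (w : ℤ → ℕ) (p : ℤ) : ℕ :=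
  (ν (w (bIdx ν w p))).getD (p - cumLen ν w (bIdx ν w p)).toNat 0

lemma concatSeq_spec (hne : ∀ j : ℤ, ν (w j) ≠ []) (j : ℤ) (o : ℕ)
    (ho : o < (ν (w j)).length) :
    concatSeq ν w (cumLen ν w j + o) = (ν (w j)).getD o 0 := by
  have hcs : cumLen ν w (j + 1) = cumLen ν w j + ((ν (w j)).length : ℤ) := cumLen_succ ν w j
  have hex : ∃ i : ℤ, cumLen ν w i ≤ cumLen ν w j + o ∧ cumLen ν w j + o < cumLen ν w (i + 1) :=
    ⟨j, by omega⟩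
  have hspec := Classical.epsilon_spec hex
  have hj : bIdx ν w (cumLen ν w j + (o:ℤ)) = j := cum_block_uniq hne hspec ⟨by omega, by omega⟩
  rw [concatSeq, hj]
  congr 1
  omega

lemma concatSeq_isShifted (hne : ∀ j : ℤ, ν (w j) ≠ []) :
    IsShiftedImage ν w 0 (concatSeq ν w) := by
  intro j
  rw [sub_zero]
  exact factorWord_eq (fun t ht => concatSeq_spec hne j t ht)

lemma concatSeq_mem (hne : ∀ j : ℤ, ν (w j) ≠ []) (p : ℤ) :
    ∃ j : ℤ, concatSeq ν w p ∈ ν (w j) := by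
  obtain ⟨j, hj1, hj2⟩ := cum_exists_block hne p
  have hcs : cumLen ν w (j + 1) = cumLen ν w j + ((ν (w j)).length : ℤ) := cumLen_succ ν w j
  have ho : (p - cumLen ν w j).toNat < (ν (w j)).length := by omega
  have hp : p = cumLen ν w j + ((p - cumLen ν w j).toNat : ℤ) := by omega
  refine ⟨j, ?_⟩
  rw [hp, concatSeq_spec hne j _ ho, List.getD_eq_getElem _ 0 ho]
  exact List.getElem_mem ho

/-- Cumulative-length correspondence for a composed morphism. -/
lemma refine_cum (hne : ∀ j : ℤ, ν (w j) ≠ []) (σ : ℕ → List ℕ) :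
    ∀ j, cumLen (fun a => (ν a).flatMap σ) w j
      = cumLen σ (concatSeq ν w) (cumLen ν w j) := by
  apply aux_int_rec_eq
  · rw [cumLen_zero, cumLen_zero, cumLen_zero]
  · intro j
    rw [cumLen_succ (fun a => (ν a).flatMap σ) w j]
    rw [cumLen_succ ν w j, cumLen_add_nat]
    have h1 : ((List.range (ν (w j)).length).map
        fun o : ℕ => ((σ (concatSeq ν w (cumLen ν w j + (o:ℤ)))).length : ℤ))
        = (ν (w j)).map (fun b => ((σ b).length : ℤ)) := by
      rw [← aux_map_range_getD (ν (w j)) (fun b => ((σ b).length : ℤ))]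
      apply List.map_congr_left
      intro o hoo
      rw [concatSeq_spec hne j o (List.mem_range.1 hoo)]
    rw [h1, ← aux_len_flatMap]
    ring

lemma aux_sum_take (l : List ℕ) (σ : ℕ → List ℕ) (o : ℕ) (ho : o ≤ l.length) :
    ((List.range o).map fun o' : ℕ => (((σ (l.getD o' 0)).length : ℤ))).sum
      = (((l.take o).flatMap σ).length : ℤ) := by
  rw [aux_len_flatMap]
  have h1 : (l.take o).length = o := by rw [List.length_take]; omega
  rw [← aux_map_range_getD (l.take o) (fun b => ((σ b).length : ℤ)), h1]
  apply congrArg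
  apply List.map_congr_left
  intro t ht
  have ht' : t < o := List.mem_range.1 ht
  have : (l.take o).getD t 0 = l.getD t 0 := by
    rw [List.getD_eq_getElem _ 0 (by rw [List.length_take]; omega),
      List.getD_eq_getElem _ 0 (by omega), List.getElem_take]
  rw [this]

lemma factorWord_extract {x : ℤ → ℕ} {a : ℤ} {A B C : List ℕ}
    (h : factorWord x a (A ++ B ++ C).length = A ++ B ++ C) :
    factorWord x (a + A.length) B.length = B := by
  have hlen : (A ++ B ++ C).length = A.length + (B.length + C.length) := by
    rw [List.length_append, List.length_append, Nat.add_assoc]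
  rw [hlen, factorWord_add, List.append_assoc] at h
  have h1 := List.append_inj h (by rw [factorWord_length])
  have h2 := h1.2
  rw [factorWord_add] at h2
  have h3 := List.append_inj h2 (by rw [factorWord_length])
  exact h3.1

/-- Refinement: a tiling by a composed morphism induces a tiling by the inner one. -/
lemma refine_inner {σ : ℕ → List ℕ} {r : ℤ} {x : ℤ → ℕ}
    (hne : ∀ j : ℤ, ν (w j) ≠ [])
    (h : IsShiftedImage (fun a => (ν a).flatMap σ) w r x) :
    IsShiftedImage σ (concatSeq ν w) r x := by
  intro q
  obtain ⟨j, hj1, hj2⟩ := cum_exists_block hne q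
  have hcs : cumLen ν w (j + 1) = cumLen ν w j + ((ν (w j)).length : ℤ) := cumLen_succ ν w j
  set o : ℕ := (q - cumLen ν w j).toNat with hodef
  have hq : q = cumLen ν w j + (o : ℤ) := by omega
  have holen : o < (ν (w j)).length := by omega
  have hzq : concatSeq ν w q = (ν (w j)).getD o 0 := by
    rw [hq]; exact concatSeq_spec hne j o holen
  have hsplit := flat_block (ν (w j)) σ o holen
  have hbig : factorWord x (cumLen (fun a => (ν a).flatMap σ) w j - r)
      ((ν (w j)).flatMap σ).length = (ν (w j)).flatMap σ := h j
  rw [hsplit] at hbig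
  have hmid := factorWord_extract hbig
  have hpos : cumLen (fun a => (ν a).flatMap σ) w j - r + (((ν (w j)).take o).flatMap σ).length
      = cumLen σ (concatSeq ν w) q - r := by
    rw [refine_cum hne σ j, ← aux_sum_take _ _ _ (le_of_lt holen)]
    have := cumLen_add_nat σ (concatSeq ν w) (cumLen ν w j) o
    rw [← hq] at this
    have h2 : ((List.range o).map fun o' : ℕ =>
        ((σ (concatSeq ν w (cumLen ν w j + (o':ℤ)))).length : ℤ)).sum
        = ((List.range o).map fun o' : ℕ => (((σ ((ν (w j)).getD o' 0)).length : ℤ))).sum := by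
      apply congrArg
      apply List.map_congr_left
      intro t ht
      rw [concatSeq_spec hne j t (lt_trans (List.mem_range.1 ht) holen)]
    omega
  rw [hpos] at hmid
  rw [hzq]
  exact hmid

end Concat

/-- Recentering a tiling so that block `0` contains position `0`. -/
lemma recenter {σ : ℕ → List ℕ} {z : ℤ → ℕ} {r : ℤ} {x : ℤ → ℕ}
    (hne : ∀ j : ℤ, σ (z j) ≠ []) (h : IsShiftedImage σ z r x) :
    ∃ k : ℤ, IsShiftedImage σ (SShift k z) (r - cumLen σ z k) x ∧
      0 ≤ r - cumLen σ z k ∧ r - cumLen σ z k < ((σ (z k)).length : ℤ) ∧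
      (∀ j, cumLen σ (SShift k z) j - (r - cumLen σ z k) = cumLen σ z (j + k) - r) := by
  obtain ⟨k, hk1, hk2⟩ := grid_exists_block (r := r) hne 0
  have hcs : cumLen σ z (k + 1) = cumLen σ z k + ((σ (z k)).length : ℤ) := cumLen_succ σ z k
  have hgrid : ∀ j, cumLen σ (SShift k z) j - (r - cumLen σ z k) = cumLen σ z (j + k) - r := by
    intro j
    rw [cumLen_shift]
    ring
  refine ⟨k, ?_, ?_, ?_, hgrid⟩
  · intro j
    have hz : SShift k z j = z (j + k) := rfl
    rw [hgrid j, hz]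
    exact h (j + k)
  · have : gridPt σ z r k ≤ 0 := hk1
    unfold gridPt at this
    omega
  · have : (0:ℤ) < gridPt σ z r (k+1) := hk2
    unfold gridPt at this
    omega



/-! #### Synchronization of tilings -/

section Sync

variable {σ : ℕ → List ℕ} {X Y : ℤ → ℕ} {w1 w2 : ℤ → ℕ} {r1 r2 : ℤ}

lemma sync_step
    (h1 : IsShiftedImage σ w1 r1 X) (h2 : IsShiftedImage σ w2 r2 Y)
    (hPF : ∀ j k : ℤ, ((σ (w1 j) <+: σ (w2 k)) ∨ (σ (w2 k) <+: σ (w1 j))) → w1 j = w2 k)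
    {c : ℤ} (hagree : ∀ i : ℤ, i < c → X i = Y i)
    {a b : ℤ} (hq : gridPt σ w1 r1 a = gridPt σ w2 r2 b)
    (hc : gridPt σ w1 r1 a
        + min (((σ (w1 a)).length : ℤ)) (((σ (w2 b)).length : ℤ)) ≤ c) :
    w1 a = w2 b ∧ gridPt σ w1 r1 (a + 1) = gridPt σ w2 r2 (b + 1) := by
  set q := gridPt σ w1 r1 a with hqdef
  have e1 : factorWord X q (σ (w1 a)).length = σ (w1 a) := h1 a
  have e2 : factorWord Y q (σ (w2 b)).length = σ (w2 b) := by
    rw [hq]; exact h2 b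
  have key : w1 a = w2 b := by
    rcases le_total (σ (w1 a)).length (σ (w2 b)).length with hL | hL
    · have hXYf : factorWord X q (σ (w1 a)).length = factorWord Y q (σ (w1 a)).length := by
        apply factorWord_congr
        intro t ht
        apply hagree
        have hmin : min (((σ (w1 a)).length : ℤ)) (((σ (w2 b)).length : ℤ))
            = ((σ (w1 a)).length : ℤ) := by
          rw [min_eq_left]; exact_mod_cast hL
        omega
      have hsplit : factorWord Y q (σ (w2 b)).length
          = factorWord Y q (σ (w1 a)).length
            ++ factorWord Y (q + (σ (w1 a)).length) ((σ (w2 b)).length - (σ (w1 a)).length) := by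
        rw [← factorWord_add]
        congr 1
        omega
      have hpre : σ (w1 a) <+: σ (w2 b) := by
        rw [← e1, hXYf, ← e2, hsplit]
        exact List.prefix_append _ _
      exact hPF a b (Or.inl hpre)
    · have hXYf : factorWord X q (σ (w2 b)).length = factorWord Y q (σ (w2 b)).length := by
        apply factorWord_congr
        intro t ht
        apply hagree
        have hmin : min (((σ (w1 a)).length : ℤ)) (((σ (w2 b)).length : ℤ))
            = ((σ (w2 b)).length : ℤ) := by
          rw [min_eq_right]; exact_mod_cast hL
        omega
      have hsplit : factorWord X q (σ (w1 a)).length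
          = factorWord X q (σ (w2 b)).length
            ++ factorWord X (q + (σ (w2 b)).length) ((σ (w1 a)).length - (σ (w2 b)).length) := by
        rw [← factorWord_add]
        congr 1
        omega
      have hpre : σ (w2 b) <+: σ (w1 a) := by
        rw [← e2, ← hXYf, ← e1, hsplit]
        exact List.prefix_append _ _
      exact hPF a b (Or.inr hpre)
  refine ⟨key, ?_⟩
  have hq' : gridPt σ w1 r1 a = gridPt σ w2 r2 b := hq
  rw [gridPt_succ, gridPt_succ, hq', key]

lemma sync_march
    (h1 : IsShiftedImage σ w1 r1 X) (h2 : IsShiftedImage σ w2 r2 Y)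
    (hne1 : ∀ j : ℤ, σ (w1 j) ≠ []) (hne2 : ∀ j : ℤ, σ (w2 j) ≠ [])
    (hPF : ∀ j k : ℤ, ((σ (w1 j) <+: σ (w2 k)) ∨ (σ (w2 k) <+: σ (w1 j))) → w1 j = w2 k)
    (hXY : ∀ i : ℤ, i < 0 → X i = Y i)
    {a b : ℤ} (hab : gridPt σ w1 r1 a = gridPt σ w2 r2 b) :
    ∀ k : ℕ, (gridPt σ w1 r1 (a + k) ≤ 0 ∨ gridPt σ w2 r2 (b + k) ≤ 0) →
      gridPt σ w1 r1 (a + k) = gridPt σ w2 r2 (b + k)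
        ∧ ∀ l : ℕ, l < k → w1 (a + l) = w2 (b + l) := by
  intro k
  induction k with
  | zero => intro _; simpa using hab
  | succ k ih =>
      intro hcond
      have hca : a + ((k+1:ℕ):ℤ) = (a + (k:ℕ)) + 1 := by push_cast; ring
      have hcb : b + ((k+1:ℕ):ℤ) = (b + (k:ℕ)) + 1 := by push_cast; ring
      rw [hca, hcb] at hcond ⊢
      have hs1 : gridPt σ w1 r1 (a + (k:ℕ)) < gridPt σ w1 r1 ((a + (k:ℕ)) + 1) :=
        (grid_mono hne1) (by omega)
      have hs2 : gridPt σ w2 r2 (b + (k:ℕ)) < gridPt σ w2 r2 ((b + (k:ℕ)) + 1) :=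
        (grid_mono hne2) (by omega)
      have hcondk : gridPt σ w1 r1 (a + (k:ℕ)) ≤ 0 ∨ gridPt σ w2 r2 (b + (k:ℕ)) ≤ 0 := by
        rcases hcond with h | h
        · left; omega
        · right; omega
      obtain ⟨heqk, hlets⟩ := ih hcondk
      have hg1 : gridPt σ w1 r1 ((a + (k:ℕ)) + 1)
          = gridPt σ w1 r1 (a + (k:ℕ)) + ((σ (w1 (a + (k:ℕ)))).length : ℤ) := gridPt_succ _ _ _ _
      have hg2 : gridPt σ w2 r2 ((b + (k:ℕ)) + 1)
          = gridPt σ w2 r2 (b + (k:ℕ)) + ((σ (w2 (b + (k:ℕ)))).length : ℤ) := gridPt_succ _ _ _ _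
      have hmin : gridPt σ w1 r1 (a + (k:ℕ))
          + min (((σ (w1 (a + (k:ℕ)))).length : ℤ)) (((σ (w2 (b + (k:ℕ)))).length : ℤ)) ≤ 0 := by
        have hm1 := min_le_left (((σ (w1 (a + (k:ℕ)))).length : ℤ)) (((σ (w2 (b + (k:ℕ)))).length : ℤ))
        have hm2 := min_le_right (((σ (w1 (a + (k:ℕ)))).length : ℤ)) (((σ (w2 (b + (k:ℕ)))).length : ℤ))
        rcases hcond with h | h
        · omega
        · omega
      obtain ⟨hlet, hnext⟩ := sync_step h1 h2 hPF hXY heqk hmin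
      refine ⟨hnext, ?_⟩
      intro l hl
      rcases lt_or_eq_of_le (Nat.lt_succ_iff.1 hl) with hl' | hl'
      · exact hlets l hl'
      · subst hl'
        exact hlet

lemma sync_past
    (h1 : IsShiftedImage σ w1 r1 X) (h2 : IsShiftedImage σ w2 r2 Y)
    (hne1 : ∀ j : ℤ, σ (w1 j) ≠ []) (hne2 : ∀ j : ℤ, σ (w2 j) ≠ [])
    (hPF : ∀ j k : ℤ, ((σ (w1 j) <+: σ (w2 k)) ∨ (σ (w2 k) <+: σ (w1 j))) → w1 j = w2 k)
    (hXY : ∀ i : ℤ, i < 0 → X i = Y i)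
    (hc1 : gridPt σ w1 r1 0 ≤ 0) (hc1' : 0 < gridPt σ w1 r1 1)
    (hc2 : gridPt σ w2 r2 0 ≤ 0) (hc2' : 0 < gridPt σ w2 r2 1)
    (F : ℤ → Prop) (hFb : ∀ c : ℤ, ∃ p, F p ∧ p < c)
    (hFB : ∀ p, F p → p < 0 →
      (∃ a : ℤ, gridPt σ w1 r1 a = p) ∧ (∃ b : ℤ, gridPt σ w2 r2 b = p)) :
    (∀ j : ℤ, j ≤ 0 → gridPt σ w1 r1 j = gridPt σ w2 r2 j)
      ∧ (∀ j : ℤ, j < 0 → w1 j = w2 j) := by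
  have main : ∀ j : ℤ, j ≤ 0 →
      gridPt σ w1 r1 j = gridPt σ w2 r2 j ∧ (j < 0 → w1 j = w2 j) := by
    intro j hj
    obtain ⟨p, hpF, hp⟩ := hFb (min (gridPt σ w1 r1 j)
      (min (gridPt σ w2 r2 j) (min (gridPt σ w1 r1 0) (gridPt σ w2 r2 0))))
    have hpneg : p < 0 := by
      have := le_min (le_refl (gridPt σ w1 r1 j)) (le_refl (gridPt σ w1 r1 j))
      simp only [lt_min_iff] at hp
      omega
    obtain ⟨⟨a, ha⟩, ⟨b, hb⟩⟩ := hFB p hpF hpneg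
    simp only [lt_min_iff] at hp
    have hab : gridPt σ w1 r1 a = gridPt σ w2 r2 b := by rw [ha, hb]
    have haj : a < j := by
      have := (grid_mono (r := r1) hne1).lt_iff_lt (a := a) (b := j)
      rw [← this]; omega
    have hbj : b < j := by
      have := (grid_mono (r := r2) hne2).lt_iff_lt (a := b) (b := j)
      rw [← this]; omega
    have ha0 : a < 0 := by
      have := (grid_mono (r := r1) hne1).lt_iff_lt (a := a) (b := 0)
      rw [← this]; omega
    have hb0 : b < 0 := by
      have := (grid_mono (r := r2) hne2).lt_iff_lt (a := b) (b := 0)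
      rw [← this]; omega
    -- march to index j on side 1
    have hkj : a + (((j - a).toNat : ℕ) : ℤ) = j := by omega
    have hk0 : a + (((0 - a).toNat : ℕ) : ℤ) = 0 := by omega
    have hk2 : b + (((0 - b).toNat : ℕ) : ℤ) = 0 := by omega
    have hmono1 : gridPt σ w1 r1 j ≤ gridPt σ w1 r1 0 :=
      (grid_mono (r := r1) hne1).le_iff_le.2 hj
    have hmono2 : gridPt σ w2 r2 j ≤ gridPt σ w2 r2 0 := by
      have h00 : j ≤ 0 := hj
      exact (grid_mono (r := r2) hne2).le_iff_le.2 h00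
    obtain ⟨hEqj, _⟩ := sync_march h1 h2 hne1 hne2 hPF hXY hab ((j - a).toNat)
      (by rw [hkj]; left; omega)
    rw [hkj] at hEqj
    obtain ⟨hEq0, hlets⟩ := sync_march h1 h2 hne1 hne2 hPF hXY hab ((0 - a).toNat)
      (by rw [hk0]; left; exact hc1)
    rw [hk0] at hEq0
    obtain ⟨hEq0', _⟩ := sync_march h1 h2 hne1 hne2 hPF hXY hab ((0 - b).toNat)
      (by rw [hk2]; right; exact hc2)
    rw [hk2] at hEq0'
    -- pin the index offset δ = b - a to 0
    have hδ : b - a = 0 := by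
      rcases lt_trichotomy (b - a) 0 with hlt | he | hgt
      · -- then a + (0 - b) = -(b-a) ≥ 1, contradiction
        have h1' : (1:ℤ) ≤ a + ((0 - b).toNat : ℤ) := by omega
        have := (grid_mono (r := r1) hne1).le_iff_le.2 h1'
        omega
      · exact he
      · have h2' : (1:ℤ) ≤ b + ((0 - a).toNat : ℤ) := by omega
        have := (grid_mono (r := r2) hne2).le_iff_le.2 h2'
        omega
    have hbeq : b + ((j - a).toNat : ℤ) = j := by omega
    rw [hbeq] at hEqj
    refine ⟨hEqj, ?_⟩
    intro hjneg
    have hlj : (j - a).toNat < (0 - a).toNat := by omega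
    have := hlets ((j - a).toNat) hlj
    rw [hkj] at this
    have hbeq2 : b + (((j - a).toNat : ℕ) : ℤ) = j := by omega
    rw [hbeq2] at this
    exact this
  exact ⟨fun j hj => (main j hj).1, fun j hj => (main j (le_of_lt hj)).2 hj⟩

lemma sync_full
    (h1 : IsShiftedImage σ w1 r1 X) (h2 : IsShiftedImage σ w2 r2 X)
    (hne1 : ∀ j : ℤ, σ (w1 j) ≠ []) (hne2 : ∀ j : ℤ, σ (w2 j) ≠ [])
    (hPF : ∀ j k : ℤ, ((σ (w1 j) <+: σ (w2 k)) ∨ (σ (w2 k) <+: σ (w1 j))) → w1 j = w2 k)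
    (hc1 : gridPt σ w1 r1 0 ≤ 0) (hc1' : 0 < gridPt σ w1 r1 1)
    (hc2 : gridPt σ w2 r2 0 ≤ 0) (hc2' : 0 < gridPt σ w2 r2 1)
    (F : ℤ → Prop) (hFb : ∀ c : ℤ, ∃ p, F p ∧ p < c)
    (hFB : ∀ p, F p →
      (∃ a : ℤ, gridPt σ w1 r1 a = p) ∧ (∃ b : ℤ, gridPt σ w2 r2 b = p)) :
    w1 = w2 ∧ r1 = r2 := by
  have hpast := sync_past h1 h2 hne1 hne2 hPF (fun i _ => rfl) hc1 hc1' hc2 hc2'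
    F hFb (fun p hp _ => hFB p hp)
  have h00 : gridPt σ w1 r1 0 = gridPt σ w2 r2 0 := hpast.1 0 le_rfl
  have hr : r1 = r2 := by
    unfold gridPt at h00
    rw [cumLen_zero, cumLen_zero] at h00
    omega
  have right : ∀ k : ℕ, gridPt σ w1 r1 (k:ℤ) = gridPt σ w2 r2 (k:ℤ)
      ∧ w1 (k:ℤ) = w2 (k:ℤ) := by
    intro k
    induction k with
    | zero =>
        refine ⟨h00, ?_⟩
        have := sync_step h1 h2 hPF (fun i _ => rfl)
          (c := gridPt σ w1 r1 0
            + min (((σ (w1 0)).length : ℤ)) (((σ (w2 0)).length : ℤ))) h00 le_rfl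
        exact this.1
    | succ k ih =>
        have hstep := sync_step h1 h2 hPF (fun i _ => rfl)
          (c := gridPt σ w1 r1 (k:ℤ)
            + min (((σ (w1 (k:ℤ))).length : ℤ)) (((σ (w2 (k:ℤ))).length : ℤ))) ih.1 le_rfl
        have hca : ((k+1:ℕ):ℤ) = (k:ℤ) + 1 := by push_cast; ring
        rw [hca]
        refine ⟨hstep.2, ?_⟩
        have hstep2 := sync_step h1 h2 hPF (fun i _ => rfl)
          (c := gridPt σ w1 r1 ((k:ℤ)+1)
            + min (((σ (w1 ((k:ℤ)+1))).length : ℤ)) (((σ (w2 ((k:ℤ)+1))).length : ℤ)))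
          hstep.2 le_rfl
        exact hstep2.1
  have hw : w1 = w2 := by
    funext j
    rcases lt_or_ge j 0 with hj | hj
    · exact hpast.2 j hj
    · have hjk : j = ((j.toNat : ℕ) : ℤ) := by omega
      rw [hjk]
      exact (right j.toNat).2
  exact ⟨hw, hr⟩

end Sync


/-! #### Generic list access helpers -/

lemma aux_getD_mem {l : List ℕ} {i : ℕ} (hi : i < l.length) : l.getD i 0 ∈ l := by
  rw [List.getD_eq_getElem l 0 hi]
  exact List.getElem_mem hi

lemma getD_of_prefix {l1 l2 : List ℕ} (h : l1 <+: l2) {i : ℕ} (hi : i < l1.length) :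
    l2.getD i 0 = l1.getD i 0 := by
  rw [List.getD_eq_getElem _ 0 hi, List.getD_eq_getElem _ 0 (lt_of_lt_of_le hi h.length_le),
    List.IsPrefix.getElem h hi]

lemma aux_getD_mid {A B C : List ℕ} {i : ℕ} (hi : i < B.length) :
    (A ++ B ++ C).getD (A.length + i) 0 = B.getD i 0 := by
  rw [List.append_assoc, List.getD_append_right _ _ _ _ (by omega),
    Nat.add_sub_cancel_left, List.getD_append _ _ _ _ hi]

lemma infix_of_getD {l : List ℕ} {o : ℕ} (ho1 : 1 ≤ o) (ho2 : o < l.length) :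
    [l.getD (o-1) 0, l.getD o 0] <:+: l := by
  have h1 : o - 1 < l.length := by omega
  refine ⟨l.take (o-1), l.drop (o+1), ?_⟩
  conv_rhs => rw [← List.take_append_drop (o-1) l]
  rw [List.drop_eq_getElem_cons h1, show (o-1)+1 = o by omega, List.drop_eq_getElem_cons ho2,
    List.getD_eq_getElem _ 0 h1, List.getD_eq_getElem _ 0 ho2]
  simp

lemma aux_adjacent {v : List ℕ} {u u' : ℕ} (hu : u ∈ v) (hu' : u' ∈ v) (hne : u ≠ u') :
    ∃ o : ℕ, o + 1 < v.length ∧ v.getD o 0 ≠ v.getD (o+1) 0 := by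
  by_contra h
  push_neg at h
  have hconst : ∀ i : ℕ, i < v.length → v.getD i 0 = v.getD 0 0 := by
    intro i
    induction i with
    | zero => intro _; rfl
    | succ i ih =>
        intro hi
        rw [← h i hi]
        exact ih (by omega)
  obtain ⟨i, hi, hig⟩ := List.mem_iff_getElem.1 hu
  obtain ⟨i', hi', hig'⟩ := List.mem_iff_getElem.1 hu'
  apply hne
  rw [← hig, ← hig', ← List.getD_eq_getElem v 0 hi, ← List.getD_eq_getElem v 0 hi',
    hconst i hi, hconst i' hi']

lemma aux_getD_replicate {k p : ℕ} : (List.replicate k (0:ℕ)).getD p 0 = 0 := by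
  rcases lt_or_ge p k with h | h
  · rw [List.getD_eq_getElem _ 0 (by simpa using h), List.getElem_replicate]
  · rw [List.getD_eq_default _ 0 (by simpa using h)]

/-! #### Consequences of Property (P_∞) -/

lemma tauIter_zero' (τ : ℕ → ℕ → List ℕ) (n a : ℕ) : tauIter τ n 0 a = [a] := rfl

lemma tauIter_succ' (τ : ℕ → ℕ → List ℕ) (n d a : ℕ) :
    tauIter τ n (d+1) a = (τ (n + d) a).flatMap (tauIter τ n d) := rfl

lemma tauIter_one' (τ : ℕ → ℕ → List ℕ) (n a : ℕ) : tauIter τ n 1 a = τ n a := by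
  rw [tauIter_succ', Nat.add_zero]
  rw [show tauIter τ n 0 = (fun b => [b]) from rfl]
  exact List.flatMap_singleton' _

section PropPinf

variable {m : ℕ → ℕ} {τ : ℕ → ℕ → List ℕ} (hP : PropertyPinf m τ)
include hP

lemma tau_ne {n a : ℕ} (h : a < m (n+1)) : τ n a ≠ [] := (hP.2.1 n a h).1

lemma tau_lt {n a c : ℕ} (h : a < m (n+1)) (hc : c ∈ τ n a) : c < m n :=
  (hP.2.1 n a h).2 c hc

lemma m_big {n : ℕ} (hn : 1 ≤ n) : n < m n := hP.1 n hn

lemma tauIter_ne : ∀ d a, a < m d → tauIter τ 0 d a ≠ [] := by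
  intro d
  induction d with
  | zero => intro a _; simp [tauIter_zero']
  | succ d ih =>
      intro a ha
      rw [tauIter_succ', Nat.zero_add]
      intro hnil
      rw [List.flatMap_eq_nil_iff] at hnil
      obtain ⟨b, hb⟩ := List.exists_mem_of_ne_nil _ (tau_ne hP ha)
      exact ih b (tau_lt hP ha hb) (hnil b hb)

lemma hat_unique {a b u : ℕ} (ha : a < m 1) (hb : b < m 1)
    (hu : u ∈ τ 0 a) (hu' : u ∈ τ 0 b) : a = b := by
  by_contra hne
  exact hP.2.2.1 a b ha hb hne u hu hu'

lemma tau0_pf {a b : ℕ} (ha : a < m 1) (hb : b < m 1)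
    (h : (τ 0 a <+: τ 0 b) ∨ (τ 0 b <+: τ 0 a)) : a = b := by
  have hna : τ 0 a ≠ [] := tau_ne hP ha
  have hnb : τ 0 b ≠ [] := tau_ne hP hb
  have hla : 0 < (τ 0 a).length := List.length_pos_iff.2 hna
  have hlb : 0 < (τ 0 b).length := List.length_pos_iff.2 hnb
  rcases h with h | h
  · have := getD_of_prefix h (i := 0) hla
    exact hat_unique hP ha hb (aux_getD_mem hla) (this ▸ aux_getD_mem hlb)
  · have := getD_of_prefix h (i := 0) hlb
    exact hat_unique hP ha hb (this ▸ aux_getD_mem hla) (aux_getD_mem hlb)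

/-! pkPrefix access -/

omit hP in
lemma dbl_len (a : ℕ) : ((List.range a).flatMap (fun j => [j,j])).length = 2*a := by
  induction a with
  | zero => rfl
  | succ a ih => rw [List.range_succ, List.flatMap_append, List.length_append, ih]; simp; omega

omit hP in
lemma dbl_getD {a p : ℕ} (hp : p < 2*a) :
    ((List.range a).flatMap (fun j => [j,j])).getD p 0 = p / 2 := by
  induction a with
  | zero => omega
  | succ a ih =>
      rw [List.range_succ, List.flatMap_append]
      rcases lt_or_ge p (2*a) with h | h
      · rw [List.getD_append _ _ _ _ (by rw [dbl_len]; exact h)]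
        exact ih h
      · rw [List.getD_append_right _ _ _ _ (by rw [dbl_len]; exact h), dbl_len]
        have : p - 2*a = 0 ∨ p - 2*a = 1 := by omega
        rcases this with h' | h' <;> rw [h'] <;> simp <;> omega

omit hP in
lemma pk_length (k a : ℕ) : (pkPrefix k a).length = 2*a + (k+1-a) := by
  rw [pkPrefix, List.length_append, dbl_len, List.length_map, List.length_range]

omit hP in
lemma pk_getD_lo {k a p : ℕ} (hp : p < 2*a) : (pkPrefix k a).getD p 0 = p / 2 := by
  rw [pkPrefix, List.getD_append _ _ _ _ (by rw [dbl_len]; exact hp)]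
  exact dbl_getD hp

omit hP in
lemma pk_getD_hi {k a p : ℕ} (hp1 : 2*a ≤ p) (hp2 : p < 2*a + (k+1-a)) :
    (pkPrefix k a).getD p 0 = a + (p - 2*a) := by
  rw [pkPrefix, List.getD_append_right _ _ _ _ (by rw [dbl_len]; exact hp1), dbl_len]
  have h1 : p - 2*a < k+1-a := by omega
  rw [List.getD_eq_getElem _ 0 (by simpa using h1), List.getElem_map, List.getElem_range]

/-! Access to the prescribed prefixes of `τ n` -/

lemma tau_len_small {n a : ℕ} (hn : 1 ≤ n) (ha : a ≤ n) :
    n + 1 + a ≤ (τ n a).length := by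
  have h := (hP.2.2.2.2.1 n hn a ha).length_le
  rw [pk_length] at h
  omega

lemma tau_getD_small {n a p : ℕ} (hn : 1 ≤ n) (ha : a ≤ n) (hp : p < 2*a + (n+1-a)) :
    (τ n a).getD p 0 = (pkPrefix n a).getD p 0 :=
  getD_of_prefix (hP.2.2.2.2.1 n hn a ha) (by rw [pk_length]; exact hp)

lemma tau_len_big {n a : ℕ} (hn : 1 ≤ n) (ha : n < a) (ha' : a < m (n+1)) :
    a + 2 ≤ (τ n a).length := by
  have h := (hP.2.2.2.2.2.1 n hn a ha ha').length_le
  simp at h; omega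

lemma tau_getD_big_lo {n a p : ℕ} (hn : 1 ≤ n) (ha : n < a) (ha' : a < m (n+1))
    (hp : p ≤ a) : (τ n a).getD p 0 = 0 := by
  have h := getD_of_prefix (hP.2.2.2.2.2.1 n hn a ha ha')
    (i := p) (by simp; omega)
  rw [h, List.getD_append _ _ _ _ (by simp; omega), aux_getD_replicate]

lemma tau_getD_big_hi {n a : ℕ} (hn : 1 ≤ n) (ha : n < a) (ha' : a < m (n+1)) :
    (τ n a).getD (a+1) 0 = 1 := by
  have h := getD_of_prefix (hP.2.2.2.2.2.1 n hn a ha ha')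
    (i := a+1) (by simp)
  rw [h, List.getD_append_right _ _ _ _ (by simp), List.length_replicate]
  simp

lemma tau_head0 {n a : ℕ} (hn : 1 ≤ n) (ha : a < m (n+1)) : (τ n a).getD 0 0 = 0 := by
  rcases le_or_gt a n with h | h
  · rcases Nat.eq_zero_or_pos a with h0 | h0
    · subst h0
      rw [tau_getD_small hP hn h (by omega), pk_getD_hi (by omega) (by omega)]
    · rw [tau_getD_small hP hn h (by omega), pk_getD_lo (by omega)]
  · exact tau_getD_big_lo hP hn h ha (by omega)

lemma tau_last {n a : ℕ} (hn : 1 ≤ n) (ha : a < m (n+1)) :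
    (τ n a).getD ((τ n a).length - 1) 0 = m n - 1 := by
  obtain ⟨l', hl'⟩ := (hP.2.2.2.2.2.2 n hn a ha).1
  rw [← hl', List.length_append]
  simp only [List.length_singleton]
  rw [List.getD_append_right _ _ _ _ (by omega)]
  simp

lemma tau_no_marker {n a : ℕ} (hn : 1 ≤ n) (ha : a < m (n+1)) :
    ¬ ([m n - 1, 0] <:+: τ n a) := (hP.2.2.2.2.2.2 n hn a ha).2

lemma tau_mem {n a b : ℕ} (hn : 1 ≤ n) (ha : a < m (n+1)) (hb : b < m n) : b ∈ τ n a :=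
  hP.2.2.2.1 n hn a ha b hb

end PropPinf



section PropPinf2

variable {m : ℕ → ℕ} {τ : ℕ → ℕ → List ℕ} (hP : PropertyPinf m τ)
include hP

/-- The "first difference" table for distinct letters, case `b < c`. -/
lemma tau_firstdiff_core {n b c : ℕ} (hn : 1 ≤ n) (hb : b < m (n+1)) (hc : c < m (n+1))
    (hlt : b < c) :
    ∃ δ : ℕ, 1 ≤ δ ∧ δ < (τ n b).length ∧ δ < (τ n c).length ∧
      (∀ i : ℕ, i < δ → (τ n b).getD i 0 = (τ n c).getD i 0) ∧
      (τ n b).getD δ 0 ≠ (τ n c).getD δ 0 ∧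
      (τ n b).getD (δ - 1) 0 = (if max b c ≤ n then min b c else 0) ∧
      min ((τ n b).getD δ 0) ((τ n c).getD δ 0) = (if max b c ≤ n then min b c else 0) := by
  have hmax : max b c = c := max_eq_right (le_of_lt hlt)
  have hmin : min b c = b := min_eq_left (le_of_lt hlt)
  rcases le_or_gt c n with hcn | hcn
  · -- both small
    have hbn : b < n := by omega
    refine ⟨2*b+1, by omega, ?_, ?_, ?_, ?_, ?_, ?_⟩
    · have := tau_len_small hP hn (le_of_lt hbn)
      omega
    · have := tau_len_small hP hn hcn
      omega
    · intro i hi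
      rcases lt_or_ge i (2*b) with h | h
      · rw [tau_getD_small hP hn (le_of_lt hbn) (by omega),
          tau_getD_small hP hn hcn (by omega), pk_getD_lo h, pk_getD_lo (by omega)]
      · have hi2 : i = 2*b := by omega
        subst hi2
        rw [tau_getD_small hP hn (le_of_lt hbn) (by omega),
          tau_getD_small hP hn hcn (by omega), pk_getD_hi (le_refl _) (by omega),
          pk_getD_lo (by omega)]
        omega
    · rw [tau_getD_small hP hn (le_of_lt hbn) (by omega),
        tau_getD_small hP hn hcn (by omega), pk_getD_hi (by omega) (by omega),
        pk_getD_lo (by omega)]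
      omega
    · rw [show 2*b+1-1 = 2*b by omega, tau_getD_small hP hn (le_of_lt hbn) (by omega),
        pk_getD_hi (le_refl _) (by omega), hmax, if_pos hcn, hmin]
      omega
    · rw [tau_getD_small hP hn (le_of_lt hbn) (by omega),
        tau_getD_small hP hn hcn (by omega), pk_getD_hi (by omega) (by omega),
        pk_getD_lo (by omega), hmax, if_pos hcn, hmin]
      omega
  · -- c is big
    have hifc : ¬ (max b c ≤ n) := by omega
    rcases Nat.eq_zero_or_pos b with hb0 | hb1
    · subst hb0
      refine ⟨1, le_refl _, ?_, ?_, ?_, ?_, ?_, ?_⟩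
      · have := tau_len_small hP hn (by omega : 0 ≤ n)
        omega
      · have := tau_len_big hP hn hcn hc
        omega
      · intro i hi
        have hi0 : i = 0 := by omega
        subst hi0
        rw [tau_head0 hP hn hb, tau_head0 hP hn hc]
      · rw [tau_getD_small hP hn (by omega) (by omega), pk_getD_hi (by omega) (by omega),
          tau_getD_big_lo hP hn hcn hc (by omega)]
        omega
      · rw [show (1:ℕ)-1 = 0 by omega, tau_head0 hP hn hb, if_neg hifc]
      · rw [tau_getD_small hP hn (by omega) (by omega), pk_getD_hi (by omega) (by omega),
          tau_getD_big_lo hP hn hcn hc (by omega), if_neg hifc]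
        omega
    · rcases le_or_gt b n with hbn | hbn
      · -- 1 ≤ b ≤ n < c
        refine ⟨2, by omega, ?_, ?_, ?_, ?_, ?_, ?_⟩
        · have := tau_len_small hP hn hbn
          omega
        · have := tau_len_big hP hn hcn hc
          omega
        · intro i hi
          interval_cases i
          · rw [tau_head0 hP hn hb, tau_head0 hP hn hc]
          · rw [tau_getD_small hP hn hbn (by omega), pk_getD_lo (by omega),
              tau_getD_big_lo hP hn hcn hc (by omega)]
        · have hb2 : (τ n b).getD 2 0 = 1 := by
            rcases eq_or_lt_of_le (Nat.succ_le_of_lt hb1) with hb1' | hb2'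
            · rw [tau_getD_small hP hn hbn (by omega), pk_getD_hi (by omega) (by omega)]
              omega
            · rw [tau_getD_small hP hn hbn (by omega), pk_getD_lo (by omega)]
          rw [hb2, tau_getD_big_lo hP hn hcn hc (by omega)]
          omega
        · rw [show (2:ℕ)-1 = 1 by omega, tau_getD_small hP hn hbn (by omega),
            pk_getD_lo (by omega), if_neg hifc]
        · have hb2 : (τ n b).getD 2 0 = 1 := by
            rcases eq_or_lt_of_le (Nat.succ_le_of_lt hb1) with hb1' | hb2'
            · rw [tau_getD_small hP hn hbn (by omega), pk_getD_hi (by omega) (by omega)]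
              omega
            · rw [tau_getD_small hP hn hbn (by omega), pk_getD_lo (by omega)]
          rw [hb2, tau_getD_big_lo hP hn hcn hc (by omega), if_neg hifc]
          omega
      · -- n < b < c
        refine ⟨b+1, by omega, ?_, ?_, ?_, ?_, ?_, ?_⟩
        · have := tau_len_big hP hn hbn hb
          omega
        · have := tau_len_big hP hn hcn hc
          omega
        · intro i hi
          rw [tau_getD_big_lo hP hn hbn hb (by omega),
            tau_getD_big_lo hP hn hcn hc (by omega)]
        · rw [tau_getD_big_hi hP hn hbn hb, tau_getD_big_lo hP hn hcn hc (by omega)]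
          omega
        · rw [show b+1-1 = b by omega, tau_getD_big_lo hP hn hbn hb (le_refl _), if_neg hifc]
        · rw [tau_getD_big_hi hP hn hbn hb, tau_getD_big_lo hP hn hcn hc (by omega),
            if_neg hifc]
          omega

lemma tau_firstdiff {n b c : ℕ} (hn : 1 ≤ n) (hb : b < m (n+1)) (hc : c < m (n+1))
    (hbc : b ≠ c) :
    ∃ δ : ℕ, 1 ≤ δ ∧ δ < (τ n b).length ∧ δ < (τ n c).length ∧
      (∀ i : ℕ, i < δ → (τ n b).getD i 0 = (τ n c).getD i 0) ∧
      (τ n b).getD δ 0 ≠ (τ n c).getD δ 0 ∧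
      (τ n b).getD (δ - 1) 0 = (if max b c ≤ n then min b c else 0) ∧
      min ((τ n b).getD δ 0) ((τ n c).getD δ 0) = (if max b c ≤ n then min b c else 0) := by
  rcases lt_trichotomy b c with h | h | h
  · exact tau_firstdiff_core hP hn hb hc h
  · exact absurd h hbc
  · obtain ⟨δ, h1, h2, h3, h4, h5, h6, h7⟩ := tau_firstdiff_core hP hn hc hb h
    refine ⟨δ, h1, h3, h2, fun i hi => (h4 i hi).symm, fun he => h5 he.symm, ?_, ?_⟩
    · rw [h4 (δ-1) (by omega)] at h6
      rw [max_comm b c, min_comm b c]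
      exact h6
    · rw [min_comm] at h7
      rw [max_comm b c, min_comm b c]
      exact h7

lemma tau_pf {n b c : ℕ} (hn : 1 ≤ n) (hb : b < m (n+1)) (hc : c < m (n+1))
    (h : (τ n b <+: τ n c) ∨ (τ n c <+: τ n b)) : b = c := by
  by_contra hbc
  obtain ⟨δ, _, hlb, hlc, _, hne, _, _⟩ := tau_firstdiff hP hn hb hc hbc
  rcases h with h | h
  · exact hne (getD_of_prefix h hlb).symm
  · exact hne (getD_of_prefix h hlc)

/-- Marker characterization of block boundaries at level `n ≥ 1`. -/
lemma marker_grid {n : ℕ} (hn : 1 ≤ n) {w : ℤ → ℕ} {s : ℤ} {Z : ℤ → ℕ}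
    (hw : ∀ j : ℤ, w j < m (n+1)) (hT : IsShiftedImage (τ n) w s Z) (p : ℤ) :
    (∃ j, gridPt (τ n) w s j = p) ↔ (Z (p-1) = m n - 1 ∧ Z p = 0) := by
  have hne : ∀ j : ℤ, τ n (w j) ≠ [] := fun j => tau_ne hP (hw j)
  have hlen : ∀ j : ℤ, 1 ≤ (τ n (w j)).length := fun j => List.length_pos_iff.2 (hne j)
  constructor
  · rintro ⟨j, rfl⟩
    constructor
    · have hgs : gridPt (τ n) w s j
          = gridPt (τ n) w s (j-1) + ((τ n (w (j-1))).length : ℤ) := by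
        have := gridPt_succ (τ n) w s (j-1)
        rw [show j - 1 + 1 = j by ring] at this
        exact this
      have hlet := shifted_letter hT (j-1) ((τ n (w (j-1))).length - 1) (by have := hlen (j-1); omega)
      rw [tau_last hP hn (hw (j-1))] at hlet
      rw [← hlet]
      congr 1
      have := hlen (j-1)
      omega
    · have hlet := shifted_letter hT j 0 (by have := hlen j; omega)
      rw [tau_head0 hP hn (hw j)] at hlet
      rw [← hlet]
      congr 1
      omega
  · rintro ⟨hm1, hm0⟩
    obtain ⟨j, hj1, hj2⟩ := grid_exists_block (r := s) hne p
    have hgs := gridPt_succ (τ n) w s j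
    set o : ℕ := (p - gridPt (τ n) w s j).toNat with hodef
    have hp : p = gridPt (τ n) w s j + (o : ℤ) := by omega
    have ho : o < (τ n (w j)).length := by omega
    rcases Nat.eq_zero_or_pos o with h0 | h0
    · exact ⟨j, by omega⟩
    · exfalso
      have hv0 : Z p = (τ n (w j)).getD o 0 := by
        rw [hp]; exact shifted_letter hT j o ho
      have hv1 : Z (p-1) = (τ n (w j)).getD (o-1) 0 := by
        have := shifted_letter hT j (o-1) (by omega)
        rw [← this]
        congr 1
        omega
      apply tau_no_marker hP hn (hw j)
      have := infix_of_getD (l := τ n (w j)) (o := o) h0 ho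
      rw [← hv0, ← hv1, hm1, hm0] at this
      exact this

end PropPinf2



lemma gridPt_zero' (σ : ℕ → List ℕ) (z : ℤ → ℕ) (j : ℤ) : gridPt σ z 0 j = cumLen σ z j :=
  sub_zero _

/-- Change of `τ 0`-letter-class: such positions are block boundaries in any
`τ 0`-tiling. -/
def ChangePtP (m : ℕ → ℕ) (τ : ℕ → ℕ → List ℕ) (x : ℤ → ℕ) (p : ℤ) : Prop :=
  ¬ ∃ a, a < m 1 ∧ x (p-1) ∈ τ 0 a ∧ x p ∈ τ 0 a

section PropPinf3

variable {m : ℕ → ℕ} {τ : ℕ → ℕ → List ℕ} (hP : PropertyPinf m τ)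
include hP

lemma changept_forced {w : ℤ → ℕ} {s : ℤ} {x : ℤ → ℕ} (hw : ∀ j : ℤ, w j < m 1)
    (hT : IsShiftedImage (τ 0) w s x) {p : ℤ} (hC : ChangePtP m τ x p) :
    ∃ j, gridPt (τ 0) w s j = p := by
  have hne : ∀ j : ℤ, τ 0 (w j) ≠ [] := fun j => tau_ne hP (hw j)
  obtain ⟨j, hj1, hj2⟩ := grid_exists_block (r := s) hne p
  have hgs := gridPt_succ (τ 0) w s j
  set o : ℕ := (p - gridPt (τ 0) w s j).toNat with hodef
  have hp : p = gridPt (τ 0) w s j + (o : ℤ) := by omega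
  have ho : o < (τ 0 (w j)).length := by omega
  rcases Nat.eq_zero_or_pos o with h0 | h0
  · exact ⟨j, by omega⟩
  · exfalso
    apply hC
    refine ⟨w j, hw j, ?_, ?_⟩
    · have hv := shifted_letter hT j (o-1) (by omega)
      have : p - 1 = gridPt (τ 0) w s j + ((o-1 : ℕ) : ℤ) := by omega
      rw [this, hv]
      exact aux_getD_mem (by omega)
    · have hv := shifted_letter hT j o ho
      rw [hp, hv]
      exact aux_getD_mem ho

lemma changept_unbounded {w : ℤ → ℕ} {r : ℤ} {x : ℤ → ℕ}
    (hw : ∀ j : ℤ, w j < m 2) (hT : IsShiftedImage (tauIter τ 0 2) w r x) (c : ℤ) :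
    ∃ p, ChangePtP m τ x p ∧ p < c := by
  have hm1 : 1 < m 1 := hP.1 1 le_rfl
  have hne : ∀ j : ℤ, tauIter τ 0 2 (w j) ≠ [] := fun j => tauIter_ne hP 2 (w j) (hw j)
  obtain ⟨j, hj⟩ := grid_below (r := r) hne c
  set v := τ 1 (w j) with hv
  have hvlt : ∀ u ∈ v, u < m 1 := fun u hu => tau_lt hP (hw j) hu
  have h0v : (0:ℕ) ∈ v := tau_mem hP le_rfl (hw j) (by omega)
  have hmv : m 1 - 1 ∈ v := tau_mem hP le_rfl (hw j) (by omega)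
  obtain ⟨o, ho1, ho2⟩ := aux_adjacent hmv h0v (by omega)
  set L0 := v.getD o 0 with hL0def
  set L1 := v.getD (o+1) 0 with hL1def
  have hL0 : L0 < m 1 := hvlt _ (aux_getD_mem (by omega))
  have hL1 : L1 < m 1 := hvlt _ (aux_getD_mem ho1)
  have hlen0 : 0 < (τ 0 L0).length := List.length_pos_iff.2 (tau_ne hP hL0)
  have hlen1 : 0 < (τ 0 L1).length := List.length_pos_iff.2 (tau_ne hP hL1)
  have hW : tauIter τ 0 2 (w j) = v.flatMap (τ 0) := by
    rw [tauIter_succ']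
    rw [show tauIter τ 0 1 = τ 0 from funext (tauIter_one' τ 0)]
  have hdrop : (v.drop (o+1)).flatMap (τ 0)
      = τ 0 L1 ++ (v.drop (o+2)).flatMap (τ 0) := by
    rw [List.drop_eq_getElem_cons ho1, List.flatMap_cons, ← List.getD_eq_getElem v 0 ho1]
  set A := (v.take o).flatMap (τ 0) with hA
  have hsplit : tauIter τ 0 2 (w j)
      = A ++ τ 0 L0 ++ (τ 0 L1 ++ (v.drop (o+2)).flatMap (τ 0)) := by
    rw [hW, flat_block v (τ 0) o (by omega), hdrop]
  have hsplit2 : tauIter τ 0 2 (w j)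
      = (A ++ τ 0 L0) ++ τ 0 L1 ++ (v.drop (o+2)).flatMap (τ 0) :=
    hsplit.trans (List.append_assoc _ _ _).symm
  set t2 : ℕ := A.length + (τ 0 L0).length with ht2
  have hlenW : t2 + (τ 0 L1).length ≤ (tauIter τ 0 2 (w j)).length := by
    rw [hsplit2, List.length_append, List.length_append, List.length_append]
    omega
  set p : ℤ := gridPt (tauIter τ 0 2) w r j + (t2 : ℤ) with hpdef
  have hx1 : x (p - 1) = (τ 0 L0).getD ((τ 0 L0).length - 1) 0 := by
    have hv1 := shifted_letter hT j (A.length + ((τ 0 L0).length - 1)) (by omega)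
    have harg : p - 1 = gridPt (tauIter τ 0 2) w r j + ((A.length + ((τ 0 L0).length - 1) : ℕ) : ℤ) := by
      push_cast
      omega
    rw [harg, hv1, hsplit, aux_getD_mid (by omega)]
  have hx2 : x p = (τ 0 L1).getD 0 0 := by
    have hv2 := shifted_letter hT j t2 (by omega)
    rw [hpdef, hv2, hsplit2]
    have : t2 = (A ++ τ 0 L0).length + 0 := by rw [List.length_append]; omega
    rw [this, aux_getD_mid (by omega)]
  refine ⟨p, ?_, ?_⟩
  · rintro ⟨a, ha, hm1', hm2'⟩
    have e1 : a = L0 := hat_unique hP ha hL0 hm1'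
      (by rw [hx1]; exact aux_getD_mem (by omega))
    have e2 : a = L1 := hat_unique hP ha hL1 hm2'
      (by rw [hx2]; exact aux_getD_mem (by omega))
    exact ho2 (by rw [← e1, ← e2])
  · have hgs := gridPt_succ (tauIter τ 0 2) w r j
    omega

/-- Peel the top morphism off a centered tiling by `τ_{[0,n+1)}`. -/
lemma decompose {n : ℕ} {w : ℤ → ℕ} {r : ℤ} {x : ℤ → ℕ}
    (hw : ∀ i : ℤ, w i < m (n+1))
    (hT : IsShiftedImage (tauIter τ 0 (n+1)) w r x)
    (hc : gridPt (tauIter τ 0 (n+1)) w r 0 ≤ 0)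
    (hc' : 0 < gridPt (tauIter τ 0 (n+1)) w r 1) :
    ∃ (z : ℤ → ℕ) (r' s : ℤ),
      (∀ p : ℤ, z p < m n) ∧
      IsShiftedImage (tauIter τ 0 n) z r' x ∧
      gridPt (tauIter τ 0 n) z r' 0 ≤ 0 ∧ 0 < gridPt (tauIter τ 0 n) z r' 1 ∧
      IsShiftedImage (τ n) w s z ∧
      gridPt (τ n) w s 0 ≤ 0 ∧ 0 < gridPt (τ n) w s 1 ∧
      (∀ jj : ℤ, gridPt (tauIter τ 0 (n+1)) w r jj
        = gridPt (tauIter τ 0 n) z r' (gridPt (τ n) w s jj)) := by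
  have hcomp : tauIter τ 0 (n+1) = fun a => (τ n a).flatMap (tauIter τ 0 n) := by
    funext a
    rw [tauIter_succ', Nat.zero_add]
  rw [hcomp] at hT
  unfold gridPt at hc hc'
  rw [hcomp] at hc hc'
  have hneτ : ∀ j : ℤ, τ n (w j) ≠ [] := fun j => tau_ne hP (hw j)
  set z0 := concatSeq (τ n) w with hz0
  have hz0lt : ∀ p : ℤ, z0 p < m n := by
    intro p
    obtain ⟨j, hj⟩ := concatSeq_mem hneτ p
    exact tau_lt hP (hw j) hj
  have hnez0 : ∀ j : ℤ, tauIter τ 0 n (z0 j) ≠ [] := fun j => tauIter_ne hP n _ (hz0lt j)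
  have hI : IsShiftedImage (tauIter τ 0 n) z0 r x := refine_inner hneτ hT
  have hO : IsShiftedImage (τ n) w 0 z0 := concatSeq_isShifted hneτ
  have hcum : ∀ jj : ℤ, cumLen (fun a => (τ n a).flatMap (tauIter τ 0 n)) w jj
      = cumLen (tauIter τ 0 n) z0 (cumLen (τ n) w jj) := refine_cum hneτ _
  obtain ⟨k, hI', hra, hrb, hg⟩ := recenter hnez0 hI
  -- monotonicity of inner cumulative lengths
  have hmono : StrictMono (fun j => cumLen (tauIter τ 0 n) z0 j) := by
    have := grid_mono (r := (0:ℤ)) hnez0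
    intro a b hab
    have h2 := this hab
    rw [gridPt_zero', gridPt_zero'] at h2
    exact h2
  -- position of k within the first big block
  have hL : cumLen (τ n) w 1 = ((τ n (w 0)).length : ℤ) := cumLen_one _ _
  have hcum0 : cumLen (fun a => (τ n a).flatMap (tauIter τ 0 n)) w 0 = 0 := cumLen_zero _ _
  have hkk : cumLen (tauIter τ 0 n) z0 k ≤ r
      ∧ r < cumLen (tauIter τ 0 n) z0 (k+1) := by
    have := cumLen_succ (tauIter τ 0 n) z0 k
    omega
  have hk0 : 0 ≤ k := by
    by_contra hk
    push_neg at hk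
    have : cumLen (tauIter τ 0 n) z0 (k+1) ≤ cumLen (tauIter τ 0 n) z0 0 :=
      hmono.le_iff_le.2 (by omega)
    rw [cumLen_zero] at this
    omega
  have hkL : k < ((τ n (w 0)).length : ℤ) := by
    by_contra hk
    push_neg at hk
    have h1 : cumLen (tauIter τ 0 n) z0 ((τ n (w 0)).length : ℤ)
        ≤ cumLen (tauIter τ 0 n) z0 k := hmono.le_iff_le.2 hk
    have h2 := hcum 1
    rw [hL] at h2
    omega
  refine ⟨SShift k z0, r - cumLen (tauIter τ 0 n) z0 k, 0 + k, fun p => hz0lt _, hI', ?_, ?_,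
    hO.shiftz k, ?_, ?_, ?_⟩
  · unfold gridPt
    rw [cumLen_zero]
    omega
  · unfold gridPt
    rw [cumLen_one]
    have h1 : SShift k z0 0 = z0 k := by
      show z0 (0 + k) = z0 k
      rw [zero_add]
    rw [h1]
    omega
  · unfold gridPt
    rw [cumLen_zero]
    omega
  · unfold gridPt
    rw [hL]
    omega
  · intro jj
    unfold gridPt
    rw [hcomp, hcum jj, hg (cumLen (τ n) w jj - (0 + k)),
      show cumLen (τ n) w jj - (0 + k) + k = cumLen (τ n) w jj by ring]

/-- Uniqueness of centered tilings of a fixed point with unbounded change points. -/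
lemma uniq_tiling {x : ℤ → ℕ} (hCh : ∀ c : ℤ, ∃ p, ChangePtP m τ x p ∧ p < c) :
    ∀ n : ℕ, 1 ≤ n → ∀ (w1 w2 : ℤ → ℕ) (r1 r2 : ℤ),
    (∀ i : ℤ, w1 i < m n) → (∀ i : ℤ, w2 i < m n) →
    IsShiftedImage (tauIter τ 0 n) w1 r1 x → IsShiftedImage (tauIter τ 0 n) w2 r2 x →
    gridPt (tauIter τ 0 n) w1 r1 0 ≤ 0 → 0 < gridPt (tauIter τ 0 n) w1 r1 1 →
    gridPt (tauIter τ 0 n) w2 r2 0 ≤ 0 → 0 < gridPt (tauIter τ 0 n) w2 r2 1 →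
    w1 = w2 ∧ r1 = r2 := by
  intro n hn
  induction n, hn using Nat.le_induction with
  | base =>
      intro w1 w2 r1 r2 hw1 hw2 hT1 hT2 hc1 hc1' hc2 hc2'
      rw [show tauIter τ 0 1 = τ 0 from funext (tauIter_one' τ 0)] at hT1 hT2 hc1 hc1' hc2 hc2'
      exact sync_full hT1 hT2 (fun j => tau_ne hP (hw1 j)) (fun j => tau_ne hP (hw2 j))
        (fun j k hpre => tau0_pf hP (hw1 j) (hw2 k) hpre) hc1 hc1' hc2 hc2'
        (ChangePtP m τ x) hCh
        (fun p hp => ⟨changept_forced hP hw1 hT1 hp, changept_forced hP hw2 hT2 hp⟩)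
  | succ n hn IH =>
      intro w1 w2 r1 r2 hw1 hw2 hT1 hT2 hc1 hc1' hc2 hc2'
      obtain ⟨z1, r1', s1, hz1lt, hI1, hic1, hic1', hO1, hoc1, hoc1', hGE1⟩ :=
        decompose hP hw1 hT1 hc1 hc1'
      obtain ⟨z2, r2', s2, hz2lt, hI2, hic2, hic2', hO2, hoc2, hoc2', hGE2⟩ :=
        decompose hP hw2 hT2 hc2 hc2'
      obtain ⟨hzeq, hreq⟩ := IH z1 z2 r1' r2' hz1lt hz2lt hI1 hI2 hic1 hic1' hic2 hic2'
      subst hzeq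
      subst hreq
      -- outer tilings of the common inner point z1
      have hmarker := marker_grid hP hn hw1 hO1
      have hmarker2 := marker_grid hP hn hw2 hO2
      have hneo1 : ∀ j : ℤ, τ n (w1 j) ≠ [] := fun j => tau_ne hP (hw1 j)
      obtain ⟨hweq, hseq⟩ := sync_full hO1 hO2 hneo1 (fun j => tau_ne hP (hw2 j))
        (fun j k hpre => by
          have := tau_pf hP hn (hw1 j) (hw2 k) hpre
          exact this) hoc1 hoc1' hoc2 hoc2'
        (fun p => z1 (p-1) = m n - 1 ∧ z1 p = 0)
        (fun c => by
          obtain ⟨j, hj⟩ := grid_below (r := s1) hneo1 c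
          exact ⟨gridPt (τ n) w1 s1 (j+1), (hmarker _).1 ⟨j+1, rfl⟩, hj⟩)
        (fun p hp => ⟨(hmarker p).2 hp, (hmarker2 p).2 hp⟩)
      -- recover r1 = r2
      refine ⟨hweq, ?_⟩
      have h01 := hGE1 0
      have h02 := hGE2 0
      rw [hweq, hseq] at h01
      unfold gridPt at h01 h02
      rw [cumLen_zero] at h01 h02
      omega
  
end PropPinf3


end Aux17
/-- Under Property `(P_∞)`: if `x, y ∈ X_τ` agree on negative
coordinates and differ at `0`, and for every `n ≥ 1` the pair `x⁽ⁿ⁾, y⁽ⁿ⁾` gives the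
centered `τ_{[0,n)}`-factorizations of `x` and `y`, then there are `N ≥ 1` and
`1 ≤ i ≤ N` with `J(x⁽ⁿ⁾, y⁽ⁿ⁾) = (v_{i,n}, 0)` for all `n ≥ N`.
(Letters are `0`-based: `v_{i,n}` is `i - 1`.) -/
theorem eventual_signal_of_propertyPinf
    (m : ℕ → ℕ) (τ : ℕ → ℕ → List ℕ) (hP : PropertyPinf m τ)
    (x y : ℤ → ℕ) (hx : x ∈ SAdicLevel m τ 0) (hy : y ∈ SAdicLevel m τ 0)
    (heq : ∀ i < (0 : ℤ), x i = y i) (hne : x 0 ≠ y 0)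
    (xs ys : ℕ → ℤ → ℕ) (r t : ℕ → ℕ)
    (hxs : ∀ n, 1 ≤ n → xs n ∈ SAdicLevel m τ n ∧
      r n < (tauIter τ 0 n (xs n 0)).length ∧
      IsShiftedImage (tauIter τ 0 n) (xs n) ((r n : ℤ)) x)
    (hys : ∀ n, 1 ≤ n → ys n ∈ SAdicLevel m τ n ∧
      t n < (tauIter τ 0 n (ys n 0)).length ∧
      IsShiftedImage (tauIter τ 0 n) (ys n) ((t n : ℤ)) y) :
    ∃ N i, 1 ≤ N ∧ 1 ≤ i ∧ i ≤ N ∧ ∀ n, N ≤ n →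
      (∀ j < (0 : ℤ), xs n j = ys n j) ∧ xs n 0 ≠ ys n 0 ∧
      xs n (-1) = i - 1 ∧ ys n (-1) = i - 1 := by
  classical
  have hxb : ∀ n, 1 ≤ n → ∀ i : ℤ, xs n i < m n := fun n hn => ((hxs n hn).1).1
  have hyb : ∀ n, 1 ≤ n → ∀ i : ℤ, ys n i < m n := fun n hn => ((hys n hn).1).1
  have hxT : ∀ n, 1 ≤ n → IsShiftedImage (tauIter τ 0 n) (xs n) ((r n : ℤ)) x :=
    fun n hn => (hxs n hn).2.2
  have hyT : ∀ n, 1 ≤ n → IsShiftedImage (tauIter τ 0 n) (ys n) ((t n : ℤ)) y :=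
    fun n hn => (hys n hn).2.2
  have hxc : ∀ n, 1 ≤ n → gridPt (tauIter τ 0 n) (xs n) ((r n : ℤ)) 0 ≤ 0 := by
    intro n hn
    unfold gridPt
    rw [cumLen_zero]
    omega
  have hyc : ∀ n, 1 ≤ n → gridPt (tauIter τ 0 n) (ys n) ((t n : ℤ)) 0 ≤ 0 := by
    intro n hn
    unfold gridPt
    rw [cumLen_zero]
    omega
  have hxc' : ∀ n, 1 ≤ n → 0 < gridPt (tauIter τ 0 n) (xs n) ((r n : ℤ)) 1 := by
    intro n hn
    unfold gridPt
    rw [cumLen_one]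
    have := (hxs n hn).2.1
    omega
  have hyc' : ∀ n, 1 ≤ n → 0 < gridPt (tauIter τ 0 n) (ys n) ((t n : ℤ)) 1 := by
    intro n hn
    unfold gridPt
    rw [cumLen_one]
    have := (hys n hn).2.1
    omega
  have hChx : ∀ c : ℤ, ∃ p, ChangePtP m τ x p ∧ p < c :=
    changept_unbounded hP (hxb 2 (by omega)) (hxT 2 (by omega))
  have hChy : ∀ c : ℤ, ∃ p, ChangePtP m τ y p ∧ p < c :=
    changept_unbounded hP (hyb 2 (by omega)) (hyT 2 (by omega))
  -- consecutive-level factorizations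
  have hFx : ∀ n, 1 ≤ n → ∃ s : ℤ, IsShiftedImage (τ n) (xs (n+1)) s (xs n) ∧
      gridPt (τ n) (xs (n+1)) s 0 ≤ 0 ∧ 0 < gridPt (τ n) (xs (n+1)) s 1 := by
    intro n hn
    obtain ⟨z, r', s, hzlt, hI, hic, hic', hO, hoc, hoc', _⟩ :=
      decompose hP (hxb (n+1) (by omega)) (hxT (n+1) (by omega))
        (hxc (n+1) (by omega)) (hxc' (n+1) (by omega))
    obtain ⟨hzeq, _⟩ := uniq_tiling hP hChx n hn z (xs n) r' ((r n : ℤ)) hzlt (hxb n hn)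
      hI (hxT n hn) hic hic' (hxc n hn) (hxc' n hn)
    rw [hzeq] at hO
    exact ⟨s, hO, hoc, hoc'⟩
  have hFy : ∀ n, 1 ≤ n → ∃ s : ℤ, IsShiftedImage (τ n) (ys (n+1)) s (ys n) ∧
      gridPt (τ n) (ys (n+1)) s 0 ≤ 0 ∧ 0 < gridPt (τ n) (ys (n+1)) s 1 := by
    intro n hn
    obtain ⟨z, r', s, hzlt, hI, hic, hic', hO, hoc, hoc', _⟩ :=
      decompose hP (hyb (n+1) (by omega)) (hyT (n+1) (by omega))
        (hyc (n+1) (by omega)) (hyc' (n+1) (by omega))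
    obtain ⟨hzeq, _⟩ := uniq_tiling hP hChy n hn z (ys n) r' ((t n : ℤ)) hzlt (hyb n hn)
      hI (hyT n hn) hic hic' (hyc n hn) (hyc' n hn)
    rw [hzeq] at hO
    exact ⟨s, hO, hoc, hoc'⟩
  -- the inductive step between consecutive levels
  have hstep : ∀ n, 1 ≤ n →
      ((∀ j : ℤ, j < 0 → xs n j = ys n j) ∧ xs n 0 ≠ ys n 0) →
      (((∀ j : ℤ, j < 0 → xs (n+1) j = ys (n+1) j) ∧ xs (n+1) 0 ≠ ys (n+1) 0) ∧
        xs n (-1) = (if max (xs (n+1) 0) (ys (n+1) 0) ≤ n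
          then min (xs (n+1) 0) (ys (n+1) 0) else 0) ∧
        ys n (-1) = (if max (xs (n+1) 0) (ys (n+1) 0) ≤ n
          then min (xs (n+1) 0) (ys (n+1) 0) else 0) ∧
        min (xs n 0) (ys n 0) = (if max (xs (n+1) 0) (ys (n+1) 0) ≤ n
          then min (xs (n+1) 0) (ys (n+1) 0) else 0)) := by
    intro n hn hPn
    obtain ⟨hA, hB⟩ := hPn
    obtain ⟨sx, Tx, cx, cx'⟩ := hFx n hn
    obtain ⟨sy, Ty, cy, cy'⟩ := hFy n hn
    have hbx : ∀ i : ℤ, xs (n+1) i < m (n+1) := hxb (n+1) (by omega)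
    have hby : ∀ i : ℤ, ys (n+1) i < m (n+1) := hyb (n+1) (by omega)
    have hnex : ∀ j : ℤ, τ n (xs (n+1) j) ≠ [] := fun j => tau_ne hP (hbx j)
    have hney : ∀ j : ℤ, τ n (ys (n+1) j) ≠ [] := fun j => tau_ne hP (hby j)
    have hmx := marker_grid hP hn hbx Tx
    have hmy := marker_grid hP hn hby Ty
    obtain ⟨hg, hl⟩ := sync_past Tx Ty hnex hney
      (fun j k hpre => tau_pf hP hn (hbx j) (hby k) hpre) hA cx cx' cy cy'
      (fun p => xs n (p-1) = m n - 1 ∧ xs n p = 0)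
      (fun cv => by
        obtain ⟨j, hj⟩ := grid_below (r := sx) hnex cv
        exact ⟨gridPt (τ n) (xs (n+1)) sx (j+1), (hmx _).1 ⟨j+1, rfl⟩, hj⟩)
      (fun p hp hneg => ⟨(hmx p).2 hp, (hmy p).2 (by
        refine ⟨?_, ?_⟩
        · rw [← hA (p-1) (by omega)]; exact hp.1
        · rw [← hA p hneg]; exact hp.2)⟩)
    have h00 : gridPt (τ n) (xs (n+1)) sx 0 = gridPt (τ n) (ys (n+1)) sy 0 := hg 0 le_rfl
    have hgx0 : gridPt (τ n) (xs (n+1)) sx 0 = -sx := by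
      unfold gridPt; rw [cumLen_zero]; ring
    have hgy0 : gridPt (τ n) (ys (n+1)) sy 0 = -sy := by
      unfold gridPt; rw [cumLen_zero]; ring
    have hsxy : sx = sy := by omega
    have hsx0 : 0 ≤ sx := by
      rw [hgx0] at cx
      omega
    set sN : ℕ := sx.toNat with hsN
    have hsNx : sN < (τ n (xs (n+1) 0)).length := by
      have h1 : gridPt (τ n) (xs (n+1)) sx 1 = ((τ n (xs (n+1) 0)).length : ℤ) - sx := by
        unfold gridPt; rw [cumLen_one]
      omega
    have hsNy : sN < (τ n (ys (n+1) 0)).length := by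
      have h1 : gridPt (τ n) (ys (n+1)) sy 1 = ((τ n (ys (n+1) 0)).length : ℤ) - sy := by
        unfold gridPt; rw [cumLen_one]
      omega
    have hx0 : xs n 0 = (τ n (xs (n+1) 0)).getD sN 0 := by
      have h2 := shifted_letter Tx 0 sN hsNx
      rw [hgx0] at h2
      rw [← h2]
      congr 1
      omega
    have hy0 : ys n 0 = (τ n (ys (n+1) 0)).getD sN 0 := by
      have h2 := shifted_letter Ty 0 sN hsNy
      rw [hgy0] at h2
      rw [← h2]
      congr 1
      omega
    have hBn1 : xs (n+1) 0 ≠ ys (n+1) 0 := by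
      intro he
      apply hB
      rw [hx0, hy0, he]
    have hsN1 : 1 ≤ sN := by
      by_contra h0
      apply hB
      rw [hx0, hy0, show sN = 0 by omega, tau_head0 hP hn (hbx 0), tau_head0 hP hn (hby 0)]
    have hagr : ∀ i : ℕ, i < sN →
        (τ n (xs (n+1) 0)).getD i 0 = (τ n (ys (n+1) 0)).getD i 0 := by
      intro i hi
      have h2 := shifted_letter Tx 0 i (by omega)
      rw [hgx0] at h2
      have h3 := shifted_letter Ty 0 i (by omega)
      rw [hgy0] at h3
      have h4 : xs n (-sx + (i:ℤ)) = ys n (-sy + (i:ℤ)) := by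
        rw [show -sy = -sx by omega]
        exact hA _ (by omega)
      rw [← h2, ← h3, h4]
    have hdif : (τ n (xs (n+1) 0)).getD sN 0 ≠ (τ n (ys (n+1) 0)).getD sN 0 := by
      rw [← hx0, ← hy0]
      exact hB
    obtain ⟨δ, hδ1, hδb, hδc, hδag, hδne, hδbefore, hδmin⟩ :=
      tau_firstdiff hP hn (hbx 0) (hby 0) hBn1
    have hδsN : δ = sN := by
      rcases lt_trichotomy δ sN with h | h | h
      · exact absurd (hagr δ h) hδne
      · exact h
      · exact absurd (hδag sN h) hdif
    subst hδsN
    have hxm1 : xs n (-1) = (τ n (xs (n+1) 0)).getD (sN - 1) 0 := by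
      have h2 := shifted_letter Tx 0 (sN - 1) (by omega)
      rw [hgx0] at h2
      rw [← h2]
      congr 1
      omega
    have hym1 : ys n (-1) = (τ n (ys (n+1) 0)).getD (sN - 1) 0 := by
      have h2 := shifted_letter Ty 0 (sN - 1) (by omega)
      rw [hgy0] at h2
      rw [← h2]
      congr 1
      omega
    refine ⟨⟨fun j hj => hl j hj, hBn1⟩, ?_, ?_, ?_⟩
    · exact hxm1.trans hδbefore
    · rw [hym1, ← hagr (sN - 1) (by omega)]
      exact hδbefore
    · rw [hx0, hy0]
      exact hδmin
  -- base case at level 1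
  have hbase : (∀ j : ℤ, j < 0 → xs 1 j = ys 1 j) ∧ xs 1 0 ≠ ys 1 0 := by
    have hT1 := hxT 1 le_rfl
    have hT2 := hyT 1 le_rfl
    have hc1 := hxc 1 le_rfl
    have hc1' := hxc' 1 le_rfl
    have hc2 := hyc 1 le_rfl
    have hc2' := hyc' 1 le_rfl
    have htau1 : tauIter τ 0 1 = τ 0 := funext (tauIter_one' τ 0)
    rw [htau1] at hT1 hT2 hc1 hc1' hc2 hc2'
    obtain ⟨hg, hl⟩ := sync_past hT1 hT2
      (fun j => tau_ne hP (hxb 1 le_rfl j)) (fun j => tau_ne hP (hyb 1 le_rfl j))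
      (fun j k hpre => tau0_pf hP (hxb 1 le_rfl j) (hyb 1 le_rfl k) hpre) heq hc1 hc1' hc2 hc2'
      (ChangePtP m τ x) hChx
      (fun p hp hneg => by
        refine ⟨changept_forced hP (hxb 1 le_rfl) hT1 hp, ?_⟩
        have hpy : ChangePtP m τ y p := by
          rintro ⟨a, ha, m1', m2'⟩
          exact hp ⟨a, ha, by rw [heq (p-1) (by omega)]; exact m1',
            by rw [heq p hneg]; exact m2'⟩
        exact changept_forced hP (hyb 1 le_rfl) hT2 hpy)
    refine ⟨fun j hj => hl j hj, ?_⟩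
    intro he
    apply hne
    have h00 := hg 0 le_rfl
    have hgx0 : gridPt (τ 0) (xs 1) ((r 1 : ℤ)) 0 = -(r 1 : ℤ) := by
      unfold gridPt; rw [cumLen_zero]; ring
    have hgy0 : gridPt (τ 0) (ys 1) ((t 1 : ℤ)) 0 = -(t 1 : ℤ) := by
      unfold gridPt; rw [cumLen_zero]; ring
    have hrt : r 1 = t 1 := by omega
    have hr1len : r 1 < (τ 0 (xs 1 0)).length := by
      have h1 := (hxs 1 le_rfl).2.1
      rwa [tauIter_one'] at h1
    have ht1len : t 1 < (τ 0 (ys 1 0)).length := by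
      have h1 := (hys 1 le_rfl).2.1
      rwa [tauIter_one'] at h1
    have e1 : x 0 = (τ 0 (xs 1 0)).getD (r 1) 0 := by
      have h2 := shifted_letter hT1 0 (r 1) hr1len
      rw [hgx0] at h2
      rw [← h2]
      congr 1
      omega
    have e2 : y 0 = (τ 0 (ys 1 0)).getD (t 1) 0 := by
      have h2 := shifted_letter hT2 0 (t 1) ht1len
      rw [hgy0] at h2
      rw [← h2]
      congr 1
      omega
    rw [e1, e2, he, hrt]
  -- all levels
  have hPall : ∀ n, 1 ≤ n → (∀ j : ℤ, j < 0 → xs n j = ys n j) ∧ xs n 0 ≠ ys n 0 := by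
    intro n hn
    induction n, hn using Nat.le_induction with
    | base => exact hbase
    | succ n hn IH => exact (hstep n hn IH).1
  -- the letter sequence d
  have hdrel : ∀ n, 1 ≤ n →
      min (xs n 0) (ys n 0) ≤ min (xs (n+1) 0) (ys (n+1) 0) ∧
      (0 < min (xs n 0) (ys n 0) →
        min (xs n 0) (ys n 0) = min (xs (n+1) 0) (ys (n+1) 0)) ∧
      xs n (-1) = min (xs n 0) (ys n 0) ∧ ys n (-1) = min (xs n 0) (ys n 0) := by
    intro n hn
    obtain ⟨_, h1, h2, h3⟩ := hstep n hn (hPall n hn)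
    by_cases hif : max (xs (n+1) 0) (ys (n+1) 0) ≤ n
    · rw [if_pos hif] at h1 h2 h3
      exact ⟨le_of_eq h3, fun _ => h3, h1.trans h3.symm, h2.trans h3.symm⟩
    · rw [if_neg hif] at h1 h2 h3
      refine ⟨by omega, by omega, h1.trans h3.symm, h2.trans h3.symm⟩
  -- stabilization of d
  have hstab : ∃ n1, 1 ≤ n1 ∧ ∀ n, n1 ≤ n → min (xs n 0) (ys n 0) = min (xs n1 0) (ys n1 0) := by
    by_cases hz : ∀ n, 1 ≤ n → min (xs n 0) (ys n 0) = 0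
    · exact ⟨1, le_rfl, fun n hn => by rw [hz n hn, hz 1 le_rfl]⟩
    · push_neg at hz
      obtain ⟨n2, hn2, hdn2⟩ := hz
      refine ⟨n2, hn2, ?_⟩
      have key : ∀ k : ℕ, min (xs (n2+k) 0) (ys (n2+k) 0) = min (xs n2 0) (ys n2 0) := by
        intro k
        induction k with
        | zero => rfl
        | succ k ih =>
            have h := (hdrel (n2+k) (by omega)).2.1
            have hpos : 0 < min (xs (n2+k) 0) (ys (n2+k) 0) := by rw [ih]; omega
            have h2 := h hpos
            rw [show n2 + (k+1) = (n2+k)+1 by omega, ← h2]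
            exact ih
      intro n hn
      rw [show n = n2 + (n - n2) by omega]
      exact key _
  obtain ⟨n1, hn1, hstab⟩ := hstab
  refine ⟨n1 + min (xs n1 0) (ys n1 0) + 1, min (xs n1 0) (ys n1 0) + 1,
    by omega, by omega, by omega, ?_⟩
  intro n hn
  have h1n : 1 ≤ n := by omega
  have hn1n : n1 ≤ n := by omega
  obtain ⟨hA, hB⟩ := hPall n h1n
  obtain ⟨_, _, h3, h4⟩ := hdrel n h1n
  refine ⟨hA, hB, ?_, ?_⟩
  · rw [h3, hstab n hn1n]
    omega
  · rw [h4, hstab n hn1n]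
    omega
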